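/- Let G = (V,E) be a directed mixed graph and let N = N(I(G)) be the DMG on V whose directed edge α→β is present if and only if α is a potential parent of β in I(G) and whose bidirected edge α↔β is present if and only if α and β are potential siblings in I(G). Then: (i) I(N) = I(G); (ii) N is a supergraph of every DMG G' on V with I(G') = I(G); and (iii) for any finite sequence of DMGs G₀ ⊆ G₁ ⊆ … ⊆ Gₘ (edge-set inclusions) with G₀ = G and Gₘ = N, every Gᵢ satisfies I(Gᵢ) = I(N). -/

import Mathlib

/-!
Directed mixed graphs (DMGs) with μ-separation, following
Mogensen & Hansen, "Markov equivalence of marginalized local independence graphs".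
-/

universe u

/-- A directed mixed graph on node set `V`: a set of directed edges (`dir a b`
meaning `a → b`) and a set of bidirected edges (`bi`, a symmetric relation since
bidirected edges are unordered pairs).  Loops are allowed. -/
structure DMG (V : Type u) where
  dir : V → V → Prop
  bi : V → V → Prop
  bi_symm : ∀ a b, bi a b → bi b a

namespace DMG

variable {V : Type u}

/-- A single step of a walk: an edge instance together with the direction in
which it is traversed (this records, in particular, orientations of loops).
A directed edge has a tail at its source and a head at its target; a bidirected
edge has heads at both endpoints. -/
inductive Step (G : DMG V) : V → V → Type u
  | dirF : ∀ {a b : V}, G.dir a b → Step G a b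
  | dirB : ∀ {a b : V}, G.dir b a → Step G a b
  | bid  : ∀ {a b : V}, G.bi a b → Step G a b

/-- Whether the step has a head (edge mark) at its start node. -/
def Step.headStart {G : DMG V} : ∀ {a b : V}, Step G a b → Bool
  | _, _, .dirF _ => false
  | _, _, .dirB _ => true
  | _, _, .bid _ => true

/-- Whether the step has a head (edge mark) at its end node. -/
def Step.headEnd {G : DMG V} : ∀ {a b : V}, Step G a b → Bool
  | _, _, .dirF _ => true
  | _, _, .dirB _ => false
  | _, _, .bid _ => true

/-- The step traverses a bidirected edge. -/
def Step.IsBid {G : DMG V} {a b : V} : Step G a b → Prop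
  | .bid _ => True
  | _ => False

/-- The step traverses a directed edge, forwards. -/
def Step.IsDirF {G : DMG V} {a b : V} : Step G a b → Prop
  | .dirF _ => True
  | _ => False

/-- The underlying edge of a step: a directed edge is the ordered pair
(tail, head); a bidirected edge is the unordered pair of its endpoints. -/
def Step.edge {G : DMG V} : ∀ {a b : V}, Step G a b → (V × V) ⊕ (Sym2 V)
  | a, b, .dirF _ => Sum.inl (a, b)
  | a, b, .dirB _ => Sum.inl (b, a)
  | a, b, .bid _ => Sum.inr s(a, b)

/-- A walk in a DMG: an alternating sequence of nodes and edges, each edge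
between its neighbouring nodes, with a chosen orientation of each edge
(in particular of each directed loop). -/
inductive Walk (G : DMG V) : V → V → Type u
  | nil (a : V) : Walk G a a
  | cons {a b c : V} (s : Step G a b) (w : Walk G b c) : Walk G a c

namespace Walk

variable {G : DMG V}

/-- A nontrivial walk contains at least one edge. -/
def Nontrivial : ∀ {a b : V}, Walk G a b → Prop
  | _, _, .nil _ => False
  | _, _, .cons _ _ => True

/-- The list of nodes of a walk, in order (with multiplicity). -/
def nodes : ∀ {a b : V}, Walk G a b → List V
  | a, _, .nil _ => [a]
  | a, _, .cons _ w => a :: w.nodes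

/-- The non-endpoint (internal) nodes of a walk, in order (with multiplicity). -/
def interior {a b : V} (w : Walk G a b) : List V :=
  (w.nodes.dropLast).drop 1

/-- The list of edges of a walk. -/
def edges : ∀ {a b : V}, Walk G a b → List ((V × V) ⊕ (Sym2 V))
  | _, _, .nil _ => []
  | _, _, .cons s w => s.edge :: w.edges

/-- Whether the first edge of the walk has a head at the first node
(`false` for a trivial walk). -/
def firstHead : ∀ {a b : V}, Walk G a b → Bool
  | _, _, .nil _ => false
  | _, _, .cons s _ => s.headStart

/-- Whether the last edge of the walk has a head at the last node
(`false` for a trivial walk). -/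
def lastHead : ∀ {a b : V}, Walk G a b → Bool
  | _, _, .nil _ => false
  | _, _, .cons s (.nil _) => s.headEnd
  | _, _, .cons _ (.cons t w) => lastHead (Walk.cons t w)

/-- Helper: conditions at all remaining internal node instances of a walk,
where `h` records whether the edge arriving at the current start node has a
head there.  A node instance is a collider if both adjoining edges have a
head at it; a collider must lie in `Anc`, a noncollider must avoid `C`. -/
def openFrom (C Anc : Set V) : ∀ {a b : V}, Bool → Walk G a b → Prop
  | _, _, _, .nil _ => True
  | a, _, h, .cons s w =>
      (if h && s.headStart then a ∈ Anc else a ∉ C) ∧ openFrom C Anc s.headEnd w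

/-- Helper: every remaining internal node instance which is a collider lies in `S`. -/
def collInFrom (S : Set V) : ∀ {a b : V}, Bool → Walk G a b → Prop
  | _, _, _, .nil _ => True
  | a, _, h, .cons s w =>
      ((h && s.headStart) = true → a ∈ S) ∧ collInFrom S s.headEnd w

/-- Every collider (internal node instance with heads on both sides) of the
walk lies in `S`. -/
def CollidersIn (S : Set V) : ∀ {a b : V}, Walk G a b → Prop
  | _, _, .nil _ => True
  | _, _, .cons s w => collInFrom S s.headEnd w

/-- The walk has no colliders. -/
def NoColliders {a b : V} (w : Walk G a b) : Prop :=
  w.CollidersIn ∅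

/-- Helper: every remaining internal node instance is a collider. -/
def allCollFrom : ∀ {a b : V}, Bool → Walk G a b → Prop
  | _, _, _, .nil _ => True
  | _, _, h, .cons s w => (h && s.headStart) = true ∧ allCollFrom s.headEnd w

/-- Every internal node instance of the walk is a collider (no noncolliders). -/
def AllColliders : ∀ {a b : V}, Walk G a b → Prop
  | _, _, .nil _ => True
  | _, _, .cons s w => allCollFrom s.headEnd w

/-- Every edge of the walk is bidirected. -/
def AllBid : ∀ {a b : V}, Walk G a b → Prop
  | _, _, .nil _ => True
  | _, _, .cons s w => s.IsBid ∧ w.AllBid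

/-- The walk consists of a directed first edge (pointing forwards) followed by
bidirected edges only (the form `α → β` or `α → γ₁ ↔ ⋯ ↔ γₙ ↔ β`). -/
def UniForm : ∀ {a b : V}, Walk G a b → Prop
  | _, _, .nil _ => False
  | _, _, .cons s w => s.IsDirF ∧ w.AllBid

end Walk

/-- `a` is an ancestor of `b`: there is a (possibly trivial) directed path
from `a` to `b`. -/
def anc (G : DMG V) (a b : V) : Prop := Relation.ReflTransGen G.dir a b

/-- The set of ancestors of nodes of `C`. -/
def anSet (G : DMG V) (C : Set V) : Set V := {a | ∃ c ∈ C, G.anc a c}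

/-- The walk is μ-connecting given `C`: it is nontrivial, its first node is not
in `C`, every collider lies in `An(C)`, no noncollider lies in `C`, and its
final edge has a head at the final node. -/
def Walk.MuConn {G : DMG V} (C : Set V) : ∀ {a b : V}, Walk G a b → Prop
  | _, _, .nil _ => False
  | a, _, .cons s w =>
      a ∉ C ∧ Walk.openFrom C (G.anSet C) s.headEnd w ∧ (Walk.cons s w).lastHead = true

/-- `B` is μ-separated from `A` given `C` in `G`: there is no μ-connecting
walk from any node of `A` to any node of `B` given `C`. -/
def muSep (G : DMG V) (A B C : Set V) : Prop :=
  ∀ ⦃a b : V⦄, a ∈ A → b ∈ B → ∀ w : Walk G a b, ¬ w.MuConn C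

/-- Two DMGs on the same node set are Markov equivalent: they induce the same
independence model via μ-separation, i.e. `I(G₁) = I(G₂)`. -/
def MarkovEq (G₁ G₂ : DMG V) : Prop :=
  ∀ A B C : Set V, muSep G₁ A B C ↔ muSep G₂ A B C

/-- `b` is separable from `a` in `I(G)`: there is `C ⊆ V ∖ {a}` with
`⟨{a},{b} | C⟩ ∈ I(G)`. -/
def separable (G : DMG V) (a b : V) : Prop :=
  ∃ C : Set V, a ∉ C ∧ muSep G {a} {b} C

/-- `a ∈ u(b, I(G))`: `b` is inseparable from `a` in `I(G)`. -/
def inU (G : DMG V) (a b : V) : Prop := ¬ G.separable a b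

/-- `G₁` is a subgraph of `G₂` (same node set, edge-set inclusion). -/
def Sub (G₁ G₂ : DMG V) : Prop :=
  (∀ a b, G₁.dir a b → G₂.dir a b) ∧ (∀ a b, G₁.bi a b → G₂.bi a b)

/-- The DMG obtained by adding the directed edge `a → b`. -/
def addDir (G : DMG V) (a b : V) : DMG V where
  dir x y := G.dir x y ∨ (x = a ∧ y = b)
  bi := G.bi
  bi_symm := G.bi_symm

/-- The DMG obtained by adding the bidirected edge `a ↔ b`. -/
def addBi (G : DMG V) (a b : V) : DMG V where
  dir := G.dir
  bi x y := G.bi x y ∨ (x = a ∧ y = b) ∨ (x = b ∧ y = a)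
  bi_symm x y h := by
    rcases h with h | h | h
    · exact Or.inl (G.bi_symm _ _ h)
    · exact Or.inr (Or.inr ⟨h.2, h.1⟩)
    · exact Or.inr (Or.inl ⟨h.2, h.1⟩)

/-- The DMG obtained by removing the directed edge `a → b`. -/
def removeDir (G : DMG V) (a b : V) : DMG V where
  dir x y := G.dir x y ∧ ¬(x = a ∧ y = b)
  bi := G.bi
  bi_symm := G.bi_symm

/-- The DMG obtained by removing the bidirected edge `a ↔ b`. -/
def removeBi (G : DMG V) (a b : V) : DMG V where
  dir := G.dir
  bi x y := G.bi x y ∧ ¬((x = a ∧ y = b) ∨ (x = b ∧ y = a))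
  bi_symm x y h := ⟨G.bi_symm _ _ h.1, fun hc => h.2 (by tauto)⟩

/-- The complete DMG: all directed and all bidirected edges present. -/
def IsComplete (G : DMG V) : Prop :=
  (∀ a b, G.dir a b) ∧ (∀ a b, G.bi a b)

/-- A DMG is maximal if it is complete, or adding any (absent) edge changes the
induced independence model. -/
def IsMaximal (G : DMG V) : Prop :=
  G.IsComplete ∨
    ∀ a b : V, (¬ G.dir a b → ¬ MarkovEq (G.addDir a b) G) ∧
      (¬ G.bi a b → ¬ MarkovEq (G.addBi a b) G)

end DMG
namespace DMG

variable {V : Type u}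

/-- An inducing path from `a` to `b`: a nontrivial path or cycle from `a` to
`b` with a head at `b`, with no noncolliders, and on which every node is an
ancestor of `a` or of `b`. -/
def IsInducingPath (G : DMG V) {a b : V} (w : Walk G a b) : Prop :=
  w.Nontrivial ∧
  (w.nodes.Nodup ∨ (a = b ∧ w.nodes.dropLast.Nodup)) ∧
  w.lastHead = true ∧
  w.AllColliders ∧
  ∀ x ∈ w.nodes, G.anc x a ∨ G.anc x b

/-- A bidirected inducing path: an inducing path all of whose edges are bidirected. -/
def IsBidirectedIP (G : DMG V) {a b : V} (w : Walk G a b) : Prop :=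
  G.IsInducingPath w ∧ w.AllBid

/-- A directed inducing path: an inducing path of the form `α → β` or
`α → γ₁ ↔ ⋯ ↔ γₙ ↔ β` with every `γᵢ` an ancestor of `β`. -/
def IsDirectedIP (G : DMG V) {a b : V} (w : Walk G a b) : Prop :=
  G.IsInducingPath w ∧ w.UniForm ∧ ∀ x ∈ w.interior, G.anc x b

/-- There exists a nontrivial walk in `G` between `x` and `y` with no
colliders, all non-endpoint nodes in `M`, and with edge marks `hs` at `x`
(`true` = head) and `he` at `y`. -/
def ConnThrough (G : DMG V) (M : Set V) (x y : V) (hs he : Bool) : Prop :=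
  ∃ w : Walk G x y, w.Nontrivial ∧ w.NoColliders ∧
    (∀ z ∈ w.interior, z ∈ M) ∧ w.firstHead = hs ∧ w.lastHead = he

/-- The latent projection `m(G, O)` of `G` on `O`: the DMG on node set `O`
having an edge (with given endpoint marks) between `α` and `β` if and only if
`G` contains a nontrivial endpoint-identical walk between `α` and `β` with no
colliders and all non-endpoint nodes in `M = V ∖ O`. -/
def latentProj (G : DMG V) (O : Set V) : DMG {x : V // x ∈ O} where
  dir x y := ConnThrough G Oᶜ x.1 y.1 false true
  bi x y := ConnThrough G Oᶜ x.1 y.1 true true ∨ ConnThrough G Oᶜ y.1 x.1 true true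
  bi_symm x y h := h.symm

/-- `x` is directedly collider-connected to `b`: there is a nontrivial walk
from `x` to `b` with a head at `b` on which every non-endpoint node is a
collider. -/
def dirCollConn (G : DMG V) (x b : V) : Prop :=
  ∃ w : Walk G x b, w.Nontrivial ∧ w.AllColliders ∧ w.lastHead = true

/-- The set `D(a,b)` of nodes in `An({a,b})` directedly collider-connected to
`b`, except `a`. -/
def Dset (G : DMG V) (a b : V) : Set V :=
  {x | x ∈ G.anSet {a, b} ∧ G.dirCollConn x b} \ {a}

/-- `a` and `b` are potential siblings in the independence model `I(G)`. -/
def PotSib (G : DMG V) (a b : V) : Prop :=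
  (G.inU b a ∧ G.inU a b) ∧
  (∀ (γ : V) (C : Set V), b ∈ C → muSep G {γ} {a} C → muSep G {γ} {b} C) ∧
  (∀ (γ : V) (C : Set V), a ∈ C → muSep G {γ} {b} C → muSep G {γ} {a} C)

/-- `a` is a potential parent of `b` in the independence model `I(G)`. -/
def PotPar (G : DMG V) (a b : V) : Prop :=
  G.inU a b ∧
  (∀ (γ : V) (C : Set V), a ∉ C → muSep G {γ} {b} C → muSep G {γ} {a} C) ∧
  (∀ (γ δ : V) (C : Set V), a ∉ C → b ∈ C →
    muSep G {γ} {δ} C → muSep G {γ} {b} C ∨ muSep G {a} {δ} C) ∧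
  (∀ (γ : V) (C : Set V), a ∉ C → muSep G {b} {γ} C → muSep G {b} {γ} (C ∪ {a}))

/-- The graph `N(I(G))`: directed edge `a → b` present iff `a` is a potential
parent of `b` in `I(G)`, bidirected edge `a ↔ b` present iff `a` and `b` are
potential siblings in `I(G)` (potential siblinghood is symmetric). -/
def NGraph (G : DMG V) : DMG V where
  dir a b := G.PotPar a b
  bi a b := G.PotSib a b ∨ G.PotSib b a
  bi_symm _ _ h := h.symm

/-- A path is m-connecting given `C` if it is a path (no repeated nodes), no
noncollider on it is in `C` and every collider on it is in `An(C)`. -/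
def Walk.MConn {G : DMG V} (C : Set V) : ∀ {a b : V}, Walk G a b → Prop
  | _, _, .nil _ => True
  | _, _, .cons s w =>
      (Walk.cons s w).nodes.Nodup ∧ Walk.openFrom C (G.anSet C) s.headEnd w

/-- `A` and `B` are m-separated by `C`: there is no m-connecting path between
a node of `A` and a node of `B` given `C`. -/
def mSep (G : DMG V) (A B C : Set V) : Prop :=
  ∀ ⦃a b : V⦄, a ∈ A → b ∈ B →
    (∀ w : Walk G a b, ¬ w.MConn C) ∧ (∀ w : Walk G b a, ¬ w.MConn C)

/-- Auxiliary directed-edge relation of the `B`-history version of `G`. -/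
def histDir (G : DMG V) (B : Set V) : (V ⊕ {x : V // x ∈ B}) → (V ⊕ {x : V // x ∈ B}) → Prop
  | .inl u, .inl v => G.dir u v
  | .inl u, .inr v => G.dir u v.1
  | _, _ => False

/-- Auxiliary bidirected-edge relation of the `B`-history version of `G`. -/
def histBi (G : DMG V) (B : Set V) : (V ⊕ {x : V // x ∈ B}) → (V ⊕ {x : V // x ∈ B}) → Prop
  | .inl u, .inl v => G.bi u v
  | .inl u, .inr v => G.bi u v.1
  | .inr u, .inl v => G.bi u.1 v
  | .inr _, .inr _ => False

/-- The `B`-history version `G(B)` of `G`: node set `V ⊔ Bᵖ`, whose subgraph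
on `V` is `G`, with additionally `α ↔ βᵖ` whenever `α ↔ β` in `G` and
`α → βᵖ` whenever `α → β` in `G` (for `α ∈ V`, `β ∈ B`). -/
def hist (G : DMG V) (B : Set V) : DMG (V ⊕ {x : V // x ∈ B}) where
  dir := G.histDir B
  bi := G.histBi B
  bi_symm x y h := by
    cases x <;> cases y <;>
      simp only [histBi] at h ⊢ <;>
      first
        | exact G.bi_symm _ _ h
        | exact h

end DMG
/-! ### Auxiliary machinery for the proof of `stmt16`. -/

namespace DMG

variable {V : Type u} {G : DMG V}

namespace Walk

/-- The arrival mark at the final node of `w`, if the arrival mark at the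
initial node is `h`. -/
def lstM : ∀ {a b : V}, Walk G a b → Bool → Bool
  | _, _, .nil _, h => h
  | _, _, .cons s w, _ => w.lstM s.headEnd

@[simp] lemma lstM_nil (a : V) (h : Bool) : (Walk.nil a : Walk G a a).lstM h = h := rfl
@[simp] lemma lstM_cons {a b c : V} (s : Step G a b) (w : Walk G b c) (h : Bool) :
    (Walk.cons s w).lstM h = w.lstM s.headEnd := rfl

lemma lastHead_cons : ∀ {b c : V} (w : Walk G b c) {a : V} (s : Step G a b),
    (Walk.cons s w).lastHead = w.lstM s.headEnd := by
  intro b c w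
  induction w with
  | nil => intro a s; rfl
  | cons t w ih => intro a s; exact ih t

/-- Append two walks. -/
def app : ∀ {a b c : V}, Walk G a b → Walk G b c → Walk G a c
  | _, _, _, .nil _, w₂ => w₂
  | _, _, _, .cons s w, w₂ => .cons s (w.app w₂)

@[simp] lemma nil_app {a b : V} (w : Walk G a b) : (Walk.nil a).app w = w := rfl
@[simp] lemma cons_app {a b c d : V} (s : Step G a b) (w : Walk G b c) (w₂ : Walk G c d) :
    (Walk.cons s w).app w₂ = .cons s (w.app w₂) := rfl

@[simp] lemma lstM_app {a b c : V} (w₁ : Walk G a b) (w₂ : Walk G b c) (h : Bool) :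
    (w₁.app w₂).lstM h = w₂.lstM (w₁.lstM h) := by
  induction w₁ generalizing h with
  | nil => rfl
  | cons s w ih => exact ih _ _

@[simp] lemma openFrom_nil (C Anc : Set V) (h : Bool) (a : V) :
    openFrom C Anc h (Walk.nil a : Walk G a a) = True := rfl

@[simp] lemma openFrom_cons (C Anc : Set V) (h : Bool) {a b c : V} (s : Step G a b)
    (w : Walk G b c) :
    openFrom C Anc h (Walk.cons s w) =
      ((if h && s.headStart then a ∈ Anc else a ∉ C) ∧ openFrom C Anc s.headEnd w) := rfl

lemma openFrom_app (C Anc : Set V) {a b c : V} (w₁ : Walk G a b) (w₂ : Walk G b c) (h : Bool) :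
    openFrom C Anc h (w₁.app w₂) ↔
      openFrom C Anc h w₁ ∧ openFrom C Anc (w₁.lstM h) w₂ := by
  induction w₁ generalizing h with
  | nil => simp
  | cons s w ih => simp [ih, and_assoc]

/-- Monotonicity of `openFrom` in the ancestor set. -/
lemma openFrom_mono {C Anc Anc' : Set V} (hA : Anc ⊆ Anc') :
    ∀ {a b : V} (w : Walk G a b) (h : Bool), openFrom C Anc h w → openFrom C Anc' h w := by
  intro a b w
  induction w with
  | nil => simp
  | cons s w ih =>
    intro h hw
    rcases hw with ⟨h1, h2⟩
    refine ⟨?_, ih _ h2⟩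
    split
    · exact hA (by simpa [*] using h1)
    · simpa [*] using h1

/-- The list of nodes judged by `openFrom` (all nodes of the walk except the last). -/
def judged : ∀ {a b : V}, Walk G a b → List V
  | _, _, .nil _ => []
  | a, _, .cons _ w => a :: w.judged

/-- Length of a walk. -/
def len : ∀ {a b : V}, Walk G a b → ℕ
  | _, _, .nil _ => 0
  | _, _, .cons _ w => w.len + 1

@[simp] lemma len_nil (a : V) : (Walk.nil a : Walk G a a).len = 0 := rfl
@[simp] lemma len_cons {a b c : V} (s : Step G a b) (w : Walk G b c) :
    (Walk.cons s w).len = w.len + 1 := rfl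

@[simp] lemma len_app {a b c : V} (w₁ : Walk G a b) (w₂ : Walk G b c) :
    (w₁.app w₂).len = w₁.len + w₂.len := by
  induction w₁ with
  | nil => simp
  | cons s w ih => simp [ih]; omega

/-- Lifting `openFrom` to a larger conditioning set, provided the node `a`
(the only new element of the conditioning set) is not judged. -/
lemma openFrom_lift {C C' Anc Anc' : Set V} {x : V} (hC : C' ⊆ C ∪ {x}) (hA : Anc ⊆ Anc') :
    ∀ {a b : V} (w : Walk G a b) (h : Bool), openFrom C Anc h w →
      (∀ z ∈ w.judged, z ≠ x) → openFrom C' Anc' h w := by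
  intro a b w
  induction w with
  | nil => simp
  | cons s w ih =>
    intro h hw hj
    simp only [judged, List.mem_cons, forall_eq_or_imp] at hj
    obtain ⟨hja, hjw⟩ := hj
    have h1 := hw.1
    refine ⟨?_, ih _ hw.2 fun z hz hzx => hjw z hz hzx⟩
    split
    · rename_i hcol
      rw [if_pos hcol] at h1
      exact hA h1
    · rename_i hcol
      rw [if_neg hcol] at h1
      intro hmem
      rcases hC hmem with hc | hc
      · exact h1 hc
      · exact hja (by simpa using hc)

/-- The list of nodes appended. -/
@[simp] lemma judged_app {a b c : V} (w₁ : Walk G a b) (w₂ : Walk G b c) :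
    (w₁.app w₂).judged = w₁.judged ++ w₂.judged := by
  induction w₁ with
  | nil => simp [judged]
  | cons s w ih => simp [judged, ih]

end Walk

/-- Reversal of a single step. -/
def Step.rev : ∀ {a b : V}, Step G a b → Step G b a
  | _, _, .dirF h => .dirB h
  | _, _, .dirB h => .dirF h
  | _, _, .bid h => .bid (G.bi_symm _ _ h)

@[simp] lemma Step.rev_headStart {a b : V} (s : Step G a b) :
    s.rev.headStart = s.headEnd := by cases s <;> rfl

@[simp] lemma Step.rev_headEnd {a b : V} (s : Step G a b) :
    s.rev.headEnd = s.headStart := by cases s <;> rfl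

namespace Walk

/-- Reversing a nontrivial walk, tracking the interior conditions. -/
lemma revOpen :
    ∀ {b c : V} (w : Walk G b c) {a : V} (s : Step G a b),
    ∃ (z : V) (s' : Step G c z) (w' : Walk G z a),
      s'.headStart = w.lstM s.headEnd ∧
      w'.lstM s'.headEnd = s.headStart ∧
      ∀ (C Anc : Set V), openFrom C Anc s.headEnd w → openFrom C Anc s'.headEnd w' ∧
        (∀ z' ∈ w'.judged, z' ∈ w.judged) := by
  intro b c w
  induction w with
  | nil =>
    intro a s
    exact ⟨a, s.rev, .nil _, by simp, by simp, fun C Anc _ => ⟨trivial, by simp [judged]⟩⟩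
  | cons t w₂ ih =>
    intro a s
    obtain ⟨z, s', w', hs1, hs2, htr⟩ := ih t
    refine ⟨z, s', w'.app (.cons s.rev (.nil _)), hs1, by simp [hs2], ?_⟩
    intro C Anc hop
    rw [openFrom_cons] at hop
    obtain ⟨h1, h2⟩ := hop
    obtain ⟨hw', hj⟩ := htr C Anc h2
    constructor
    · rw [openFrom_app]
      refine ⟨hw', ?_⟩
      rw [hs2]
      refine ⟨?_, trivial⟩
      rwa [Step.rev_headStart, Bool.and_comm]
    · intro z' hz'
      rw [judged_app] at hz'
      rcases List.mem_append.mp hz' with hz' | hz'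
      · exact List.mem_cons_of_mem _ (hj z' hz')
      · simp only [judged, List.mem_cons, List.not_mem_nil, or_false] at hz'
        simp [judged, hz']

/-- Splitting a walk at an occurrence of `x` among its judged nodes. -/
lemma split_at_judged {x : V} :
    ∀ {a b : V} (w : Walk G a b), x ∈ w.judged →
    ∃ (y : V) (w₁ : Walk G a x) (s : Step G x y) (w₂ : Walk G y b),
      w = w₁.app (.cons s w₂) ∧ w₂.len < w.len := by
  intro a b w
  induction w with
  | nil => simp [judged]
  | cons s w ih =>
    intro hx
    rcases List.mem_cons.mp hx with h | h
    · subst h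
      exact ⟨_, .nil _, s, w, rfl, by simp⟩
    · obtain ⟨y, w₁, s₃, w₂, heq, hlen⟩ := ih h
      refine ⟨y, .cons s w₁, s₃, w₂, ?_, ?_⟩
      · rw [cons_app, heq]
      · simp; omega

end Walk

section SepHelpers

lemma muSep_single_iff {x y : V} {C : Set V} :
    G.muSep {x} {y} C ↔ ∀ w : Walk G x y, ¬ w.MuConn C := by
  constructor
  · intro h w; exact h rfl rfl w
  · intro h a b ha hb w
    obtain rfl : a = x := ha
    obtain rfl : b = y := hb
    exact h w

lemma not_muSep_single {x y : V} {C : Set V} :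
    ¬ G.muSep {x} {y} C ↔ ∃ w : Walk G x y, w.MuConn C := by
  rw [muSep_single_iff]; push_neg; rfl

lemma muSep_iff_forall {A B C : Set V} :
    G.muSep A B C ↔ ∀ x ∈ A, ∀ y ∈ B, G.muSep {x} {y} C := by
  constructor
  · intro h x hx y hy a b ha hb w
    obtain rfl : a = x := ha
    obtain rfl : b = y := hb
    exact h hx hy w
  · intro h a b ha hb w
    exact h a ha b hb rfl rfl w

lemma inU_walks {a b : V} (hu : G.inU a b) (C : Set V) (ha : a ∉ C) :
    ∃ w : Walk G a b, w.MuConn C := by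
  by_contra h
  exact hu ⟨C, ha, muSep_single_iff.mpr fun w hw => h ⟨w, hw⟩⟩

end SepHelpers

section AncLemmas

lemma Sub.refl (G : DMG V) : Sub G G := ⟨fun _ _ h => h, fun _ _ h => h⟩

lemma sub_addDir (a b : V) : Sub G (G.addDir a b) :=
  ⟨fun _ _ h => Or.inl h, fun _ _ h => h⟩

lemma sub_addBi (a b : V) : Sub G (G.addBi a b) :=
  ⟨fun _ _ h => h, fun _ _ h => Or.inl h⟩

lemma anc_mono {G₁ G₂ : DMG V} (hs : Sub G₁ G₂) {x y : V} (h : G₁.anc x y) : G₂.anc x y :=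
  Relation.ReflTransGen.mono (fun a b hab => hs.1 a b hab) x y h

lemma anSet_mono {G₁ G₂ : DMG V} (hs : Sub G₁ G₂) (C : Set V) :
    G₁.anSet C ⊆ G₂.anSet C := fun _ ⟨c, hc, hanc⟩ => ⟨c, hc, anc_mono hs hanc⟩

lemma subset_anSet (C : Set V) : C ⊆ G.anSet C := fun c hc => ⟨c, hc, .refl⟩

lemma anSet_mono_set {C C' : Set V} (h : C ⊆ C') : G.anSet C ⊆ G.anSet C' :=
  fun _ ⟨c, hc, hanc⟩ => ⟨c, h hc, hanc⟩

lemma anc_anSet {x y : V} {C : Set V} (h : G.anc x y) (hy : y ∈ G.anSet C) :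
    x ∈ G.anSet C := by
  obtain ⟨c, hc, hanc⟩ := hy
  exact ⟨c, hc, h.trans hanc⟩

lemma anSet_union_singleton (C : Set V) (a : V) :
    G.anSet (C ∪ {a}) = G.anSet C ∪ {z | G.anc z a} := by
  ext z
  constructor
  · rintro ⟨c, hc | hc, hanc⟩
    · exact Or.inl ⟨c, hc, hanc⟩
    · obtain rfl : c = a := hc
      exact Or.inr hanc
  · rintro (⟨c, hc, hanc⟩ | h)
    · exact ⟨c, Or.inl hc, hanc⟩
    · exact ⟨a, Or.inr rfl, h⟩

/-- Ancestor analysis for `addDir`. -/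
lemma anSet_addDir_subset (a b : V) (C : Set V) :
    (G.addDir a b).anSet C ⊆ G.anSet C ∪ {z | G.anc z a} := by
  rintro x ⟨c, hc, hanc⟩
  induction hanc using Relation.ReflTransGen.head_induction_on with
  | refl => exact Or.inl ⟨c, hc, .refl⟩
  | head hd _ ih =>
    rcases hd with hd | ⟨rfl, rfl⟩
    · rcases ih with ⟨c', hc', hanc'⟩ | ih
      · exact Or.inl ⟨c', hc', .head hd hanc'⟩
      · exact Or.inr (Relation.ReflTransGen.head hd ih)
    · exact Or.inr .refl

lemma anSet_addDir_of_not (a b : V) {C : Set V} (hb : b ∉ G.anSet C) :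
    (G.addDir a b).anSet C ⊆ G.anSet C := by
  rintro x ⟨c, hc, hanc⟩
  induction hanc using Relation.ReflTransGen.head_induction_on with
  | refl => exact ⟨c, hc, .refl⟩
  | head hd _ ih =>
    rcases hd with hd | ⟨rfl, rfl⟩
    · obtain ⟨c', hc', hanc'⟩ := ih
      exact ⟨c', hc', .head hd hanc'⟩
    · exact absurd ih hb

lemma mem_anSet_addDir (a b : V) {C : Set V} (hb : b ∈ G.anSet C) :
    a ∈ (G.addDir a b).anSet C := by
  obtain ⟨c, hc, hanc⟩ := anSet_mono (sub_addDir a b) C hb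
  exact ⟨c, hc, .head (Or.inr ⟨rfl, rfl⟩) hanc⟩

lemma anSet_addBi (a b : V) (C : Set V) : (G.addBi a b).anSet C = G.anSet C := rfl

end AncLemmas

section MapStrip

variable {G₁ G₂ H : DMG V}

/-- Mapping a step along a subgraph inclusion. -/
def Step.map (hs : Sub G₁ G₂) : ∀ {a b : V}, Step G₁ a b → Step G₂ a b
  | _, _, .dirF h => .dirF (hs.1 _ _ h)
  | _, _, .dirB h => .dirB (hs.1 _ _ h)
  | _, _, .bid h => .bid (hs.2 _ _ h)

@[simp] lemma Step.map_headStart (hs : Sub G₁ G₂) {a b : V} (s : Step G₁ a b) :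
    (s.map hs).headStart = s.headStart := by cases s <;> rfl

@[simp] lemma Step.map_headEnd (hs : Sub G₁ G₂) {a b : V} (s : Step G₁ a b) :
    (s.map hs).headEnd = s.headEnd := by cases s <;> rfl

/-- Mapping a walk along a subgraph inclusion. -/
def Walk.map (hs : Sub G₁ G₂) : ∀ {a b : V}, Walk G₁ a b → Walk G₂ a b
  | _, _, .nil a => .nil a
  | _, _, .cons s w => .cons (s.map hs) (w.map hs)

@[simp] lemma Walk.map_lstM (hs : Sub G₁ G₂) : ∀ {a b : V} (w : Walk G₁ a b) (h : Bool),
    (w.map hs).lstM h = w.lstM h := by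
  intro a b w
  induction w with
  | nil => intro h; rfl
  | cons s w ih => intro h; simp [Walk.map, ih]

lemma Walk.map_openFrom (hs : Sub G₁ G₂) {C Anc : Set V} :
    ∀ {a b : V} (w : Walk G₁ a b) (h : Bool),
    Walk.openFrom C Anc h w → Walk.openFrom C Anc h (w.map hs) := by
  intro a b w
  induction w with
  | nil => intro h _; trivial
  | cons s w ih =>
    intro h hw
    refine ⟨?_, by simpa using ih _ hw.2⟩
    simpa using hw.1

lemma Walk.map_muConn (hs : Sub G₁ G₂) {C : Set V} {a b : V} {w : Walk G₁ a b}
    (hw : w.MuConn C) : (w.map hs).MuConn C := by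
  cases w with
  | nil => exact hw.elim
  | cons s w =>
    obtain ⟨h1, h2, h3⟩ := hw
    refine ⟨h1, ?_, ?_⟩
    · simp only [Step.map_headEnd]
      exact Walk.map_openFrom hs w _
        (Walk.openFrom_mono (anSet_mono hs C) w _ h2)
    · rw [Walk.lastHead_cons] at h3 ⊢
      simpa using h3

/-- A step of `H` is good wrt `G` if `G` has a step with the same endpoints
and marks. -/
def GoodStep (G : DMG V) {a b : V} (s : Step H a b) : Prop :=
  ∃ t : Step G a b, t.headStart = s.headStart ∧ t.headEnd = s.headEnd

/-- All steps of the walk are good. -/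
def Walk.allGood (G : DMG V) : ∀ {a b : V}, Walk H a b → Prop
  | _, _, .nil _ => True
  | _, _, .cons s w => GoodStep G s ∧ w.allGood G

open Classical in
/-- Number of bad steps of a walk. -/
noncomputable def Walk.badN (G : DMG V) : ∀ {a b : V}, Walk H a b → ℕ
  | _, _, .nil _ => 0
  | _, _, .cons s w => (if GoodStep G s then 0 else 1) + w.badN G

lemma Walk.badN_zero_iff : ∀ {a b : V} (w : Walk H a b), w.badN G = 0 ↔ w.allGood G := by
  intro a b w
  induction w with
  | nil => simp [Walk.badN, Walk.allGood]
  | cons s w ih =>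
    by_cases h : GoodStep G s <;> simp [Walk.badN, Walk.allGood, h, ih]

lemma Walk.badN_app : ∀ {a b c : V} (w₁ : Walk H a b) (w₂ : Walk H b c),
    (w₁.app w₂).badN G = w₁.badN G + w₂.badN G := by
  intro a b c w₁ w₂
  induction w₁ with
  | nil => simp [Walk.badN]
  | cons s w ih => simp [Walk.badN, ih]; omega

lemma Walk.split_first_bad {n : ℕ} :
    ∀ {a b : V} (w : Walk H a b), w.badN G = n + 1 →
    ∃ (x y : V) (w₁ : Walk H a x) (sN : Step H x y) (w₂ : Walk H y b),
      w = w₁.app (.cons sN w₂) ∧ w₁.allGood G ∧ ¬ GoodStep G sN ∧ w₂.badN G = n := by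
  intro a b w
  induction w with
  | nil => intro h; simp [Walk.badN] at h
  | cons s w ih =>
    intro h
    by_cases hg : GoodStep G s
    · rw [Walk.badN, if_pos hg, Nat.zero_add] at h
      obtain ⟨x, y, w₁, sN, w₂, heq, hall, hbad, hn⟩ := ih h
      exact ⟨x, y, .cons s w₁, sN, w₂, by rw [Walk.cons_app, heq], ⟨hg, hall⟩, hbad, hn⟩
    · rw [Walk.badN, if_neg hg] at h
      exact ⟨_, _, .nil _, s, w, rfl, trivial, hg, by omega⟩

lemma Walk.strip : ∀ {a b : V} (w : Walk H a b), w.allGood G →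
    ∃ w' : Walk G a b,
      (∀ (C A : Set V) (h : Bool), Walk.openFrom C A h w → Walk.openFrom C A h w') ∧
      (∀ h, w'.lstM h = w.lstM h) := by
  intro a b w
  induction w with
  | nil => exact fun _ => ⟨.nil _, fun _ _ _ _ => trivial, fun _ => rfl⟩
  | cons s w ih =>
    rintro ⟨⟨t, ht1, ht2⟩, hall⟩
    obtain ⟨w', htr, hl⟩ := ih hall
    refine ⟨.cons t w', ?_, ?_⟩
    · intro C A h hw
      rw [Walk.openFrom_cons] at hw
      refine ⟨by rw [ht1]; exact hw.1, ?_⟩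
      rw [ht2]
      exact htr _ _ _ hw.2
    · intro h
      rw [Walk.lstM_cons, Walk.lstM_cons, ht2]
      exact hl _

/-- Classification of bad steps of `addDir`. -/
lemma badStep_addDir {a b : V} : ∀ {x y : V} (s : Step (G.addDir a b) x y),
    ¬ GoodStep G s →
    (a = x ∧ b = y ∧ s.headStart = false ∧ s.headEnd = true) ∨
    (b = x ∧ a = y ∧ s.headStart = true ∧ s.headEnd = false) := by
  intro x y s hbad
  cases s with
  | dirF h =>
    rcases h with h | ⟨rfl, rfl⟩
    · exact absurd ⟨.dirF h, rfl, rfl⟩ hbad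
    · exact Or.inl ⟨rfl, rfl, rfl, rfl⟩
  | dirB h =>
    rcases h with h | ⟨rfl, rfl⟩
    · exact absurd ⟨.dirB h, rfl, rfl⟩ hbad
    · exact Or.inr ⟨rfl, rfl, rfl, rfl⟩
  | bid h => exact absurd ⟨.bid h, rfl, rfl⟩ hbad

/-- Classification of bad steps of `addBi`. -/
lemma badStep_addBi {a b : V} : ∀ {x y : V} (s : Step (G.addBi a b) x y),
    ¬ GoodStep G s →
    (s.headStart = true ∧ s.headEnd = true) ∧ ((a = x ∧ b = y) ∨ (b = x ∧ a = y)) := by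
  intro x y s hbad
  cases s with
  | dirF h => exact absurd ⟨.dirF h, rfl, rfl⟩ hbad
  | dirB h => exact absurd ⟨.dirB h, rfl, rfl⟩ hbad
  | bid h =>
    rcases h with h | ⟨rfl, rfl⟩ | ⟨rfl, rfl⟩
    · exact absurd ⟨.bid h, rfl, rfl⟩ hbad
    · exact ⟨⟨rfl, rfl⟩, Or.inl ⟨rfl, rfl⟩⟩
    · exact ⟨⟨rfl, rfl⟩, Or.inr ⟨rfl, rfl⟩⟩

end MapStrip

section MuConnHelpers

lemma Walk.muConn_mk {a y b : V} {C : Set V} (s : Step G a y) (w : Walk G y b)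
    (h1 : a ∉ C) (h2 : Walk.openFrom C (G.anSet C) s.headEnd w)
    (h3 : w.lstM s.headEnd = true) : (Walk.cons s w).MuConn C :=
  ⟨h1, h2, by rw [Walk.lastHead_cons]; exact h3⟩

lemma Walk.muConn_elim {a b : V} {C : Set V} {w : Walk G a b} (h : w.MuConn C) :
    ∃ (y : V) (s : Step G a y) (w' : Walk G y b), w = .cons s w' ∧ a ∉ C ∧
      Walk.openFrom C (G.anSet C) s.headEnd w' ∧ w'.lstM s.headEnd = true := by
  cases w with
  | nil => exact h.elim
  | cons s w' =>
    obtain ⟨h1, h2, h3⟩ := h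
    rw [Walk.lastHead_cons] at h3
    exact ⟨_, s, w', rfl, h1, h2, h3⟩

/-- Gluing a μ-connecting walk with a further connecting piece. -/
lemma Walk.muConn_app {γ x δ y : V} {C : Set V} {u : Walk G γ x} (hu : u.MuConn C)
    (s : Step G x y) (w : Walk G y δ)
    (hj₁ : s.headStart = true → x ∈ G.anSet C)
    (hj₂ : s.headStart = false → x ∉ C)
    (hop : Walk.openFrom C (G.anSet C) s.headEnd w)
    (hl : w.lstM s.headEnd = true) :
    (u.app (.cons s w)).MuConn C := by
  obtain ⟨z, s₀, b₀, rfl, h1, h2, h3⟩ := Walk.muConn_elim hu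
  rw [Walk.cons_app]
  refine Walk.muConn_mk _ _ h1 ?_ ?_
  · rw [Walk.openFrom_app]
    refine ⟨h2, ?_⟩
    rw [h3]
    refine ⟨?_, hop⟩
    cases hss : s.headStart
    · simpa [hss] using hj₂ hss
    · simpa [hss] using hj₁ hss
  · rw [Walk.lstM_app, h3]
    exact hl

end MuConnHelpers

section DirWalks

/-- A directed walk (all edges forwards), avoiding `C`, from `x` to `t`. -/
lemma exists_dirWalk {C : Set V} (Anc : Set V) :
    ∀ {x t : V}, G.anc x t → x ∉ G.anSet C →
    ∃ w : Walk G x t, Walk.openFrom C Anc true w ∧ w.lstM true = true := by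
  intro x t h
  induction h using Relation.ReflTransGen.head_induction_on with
  | refl => exact fun _ => ⟨.nil _, trivial, rfl⟩
  | head hd htl ih =>
    intro hx
    have hy := fun hy => hx (anc_anSet (.single hd) hy)
    obtain ⟨w, hw, hl⟩ := ih hy
    refine ⟨.cons (.dirF hd) w, ⟨?_, hw⟩, hl⟩
    simp only [Step.headStart, Bool.and_false, if_neg Bool.false_ne_true]
    exact fun hxc => hx (subset_anSet C hxc)

/-- A reversed directed walk (all edges backwards), avoiding `C`, from `t` to `x`. -/
lemma exists_revDirWalk {C : Set V} (Anc : Set V) :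
    ∀ {x t : V}, G.anc x t → x ∉ G.anSet C →
    ∃ w : Walk G t x, Walk.openFrom C Anc false w ∧ w.lstM false = false := by
  intro x t h
  induction h using Relation.ReflTransGen.head_induction_on with
  | refl => exact fun _ => ⟨.nil _, trivial, rfl⟩
  | head hd htl ih =>
    intro hx
    have hy := fun hy => hx (anc_anSet (.single hd) hy)
    obtain ⟨w, hw, hl⟩ := ih hy
    refine ⟨w.app (.cons (.dirB hd) (.nil _)), ?_, ?_⟩
    · rw [Walk.openFrom_app, hl]
      refine ⟨hw, ?_, trivial⟩
      simp only [Bool.false_and, if_neg Bool.false_ne_true]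
      exact fun hyc => hy (subset_anSet C hyc)
    · simp [Step.headEnd]

end DirWalks

section Split

/-- Split a walk at the first judged node that is in `Anc₁` as a collider but
not in `Anc₂`. -/
lemma Walk.split_first_badcol {C₁ C₂ Anc₁ Anc₂ : Set V} (hC : C₂ ⊆ C₁) :
    ∀ {a b : V} (w : Walk G a b) (h : Bool), Walk.openFrom C₁ Anc₁ h w →
    Walk.openFrom C₂ Anc₂ h w ∨
    ∃ (x y : V) (w₁ : Walk G a x) (s : Step G x y) (w₂ : Walk G y b),
      w = w₁.app (.cons s w₂) ∧ Walk.openFrom C₂ Anc₂ h w₁ ∧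
      w₁.lstM h = true ∧ s.headStart = true ∧ x ∈ Anc₁ ∧ x ∉ Anc₂ ∧
      Walk.openFrom C₁ Anc₁ s.headEnd w₂ := by
  intro a b w
  induction w with
  | nil => exact fun h _ => Or.inl trivial
  | @cons a y b s w ih =>
    intro h hw
    rw [Walk.openFrom_cons] at hw
    obtain ⟨h1, h2⟩ := hw
    by_cases hcol : (h && s.headStart) = true
    · rw [if_pos hcol] at h1
      by_cases ha2 : a ∈ Anc₂
      · rcases ih _ h2 with hgood | ⟨x, y, w₁, s', w₂, heq, ho, hl, hhs, hx1, hx2, ho2⟩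
        · exact Or.inl ⟨by rw [if_pos hcol]; exact ha2, hgood⟩
        · exact Or.inr ⟨x, y, .cons s w₁, s', w₂, by rw [Walk.cons_app, heq],
            ⟨by rw [if_pos hcol]; exact ha2, ho⟩, by simpa using hl, hhs, hx1, hx2, ho2⟩
      · obtain ⟨hh, hhs⟩ := Bool.and_eq_true_iff.mp hcol
        exact Or.inr ⟨a, _, .nil _, s, w, rfl, trivial, by simpa using hh, hhs, h1, ha2, h2⟩
    · rw [if_neg hcol] at h1
      rcases ih _ h2 with hgood | ⟨x, y, w₁, s', w₂, heq, ho, hl, hhs, hx1, hx2, ho2⟩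
      · exact Or.inl ⟨by rw [if_neg hcol]; exact fun hc => h1 (hC hc), hgood⟩
      · exact Or.inr ⟨x, y, .cons s w₁, s', w₂, by rw [Walk.cons_app, heq],
          ⟨by rw [if_neg hcol]; exact fun hc => h1 (hC hc), ho⟩, by simpa using hl,
          hhs, hx1, hx2, ho2⟩

end Split

section Jump

/-- The jump lemma: from a suffix of a semi-connecting walk entered at a node
which is an ancestor of `a` (and not an ancestor of `C`), build a μ-connecting
walk from `a`, given `C`. -/
lemma jump {a : V} {C C' Anc' : Set V} (hC : C ⊆ C') (haC : a ∉ C)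
    (hA : ∀ z, z ∈ Anc' → z ∉ G.anSet C → G.anc z a) :
    ∀ (n : ℕ) {x y₀ δ : V} (s : Step G x y₀) (w₂ : Walk G y₀ δ),
      w₂.len ≤ n → G.anc x a → x ∉ G.anSet C →
      Walk.openFrom C' Anc' s.headEnd w₂ → w₂.lstM s.headEnd = true →
      ∃ u : Walk G a δ, u.MuConn C := by
  intro n
  induction n using Nat.strong_induction_on with
  | _ n ih =>
    intro x y₀ δ s w₂ hlen hanc hx hop hlast
    rcases Walk.split_first_badcol (C₁ := C') (C₂ := C) (Anc₁ := Anc')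
        (Anc₂ := G.anSet C) hC w₂ _ hop with hgood |
        ⟨x₂, y₂, w₁, s₂, w₂', heq, _, _, _, hx1, hx2, ho2⟩
    · obtain ⟨rdw, hrdw, hrl⟩ := exists_revDirWalk (G := G) (C := C) (G.anSet C) hanc hx
      cases rdw with
      | nil =>
        exact ⟨.cons s w₂, Walk.muConn_mk s w₂ haC hgood hlast⟩
      | cons t rest =>
        rw [Walk.openFrom_cons] at hrdw
        rw [Walk.lstM_cons] at hrl
        refine ⟨.cons t (rest.app (.cons s w₂)), Walk.muConn_mk _ _ haC ?_ ?_⟩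
        · rw [Walk.openFrom_app, hrl]
          refine ⟨hrdw.2, ?_, hgood⟩
          simp only [Bool.false_and, if_neg Bool.false_ne_true]
          exact fun hxc => hx (subset_anSet C hxc)
        · rw [Walk.lstM_app, hrl]
          exact hlast
    · have hanc₂ : G.anc x₂ a := hA x₂ hx1 hx2
      have hlast₂ : w₂'.lstM s₂.headEnd = true := by
        rw [heq, Walk.lstM_app, Walk.lstM_cons] at hlast
        exact hlast
      have hlen₂ : w₂'.len < n := by
        have := hlen
        rw [heq, Walk.len_app, Walk.len_cons] at this
        omega
      exact ih w₂'.len hlen₂ s₂ w₂' le_rfl hanc₂ hx2 ho2 hlast₂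

end Jump

section EdgePotential

/-- A bidirected edge makes its endpoints potential siblings. -/
lemma potSib_of_bi {a b : V} (h : G.bi a b) : G.PotSib a b := by
  refine ⟨⟨?_, ?_⟩, ?_, ?_⟩
  · rintro ⟨C, hbC, hsep⟩
    exact muSep_single_iff.mp hsep (.cons (.bid (G.bi_symm a b h)) (.nil _))
      (Walk.muConn_mk _ _ hbC trivial rfl)
  · rintro ⟨C, haC, hsep⟩
    exact muSep_single_iff.mp hsep (.cons (.bid h) (.nil _))
      (Walk.muConn_mk _ _ haC trivial rfl)
  · intro γ C hbC hsep
    by_contra hns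
    obtain ⟨w, hw⟩ := not_muSep_single.mp hns
    refine muSep_single_iff.mp hsep (w.app (.cons (.bid (G.bi_symm a b h)) (.nil _))) ?_
    exact Walk.muConn_app hw _ _ (fun _ => subset_anSet C hbC)
      (fun h' => by simp [Step.headStart] at h') trivial rfl
  · intro γ C haC hsep
    by_contra hns
    obtain ⟨w, hw⟩ := not_muSep_single.mp hns
    refine muSep_single_iff.mp hsep (w.app (.cons (.bid h) (.nil _))) ?_
    exact Walk.muConn_app hw _ _ (fun _ => subset_anSet C haC)
      (fun h' => by simp [Step.headStart] at h') trivial rfl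

/-- A directed edge makes its source a potential parent of its target. -/
lemma potPar_of_dir {a b : V} (h : G.dir a b) : G.PotPar a b := by
  refine ⟨?_, ?_, ?_, ?_⟩
  · rintro ⟨C, haC, hsep⟩
    exact muSep_single_iff.mp hsep (.cons (.dirF h) (.nil _))
      (Walk.muConn_mk _ _ haC trivial rfl)
  · intro γ C haC hsep
    by_contra hns
    obtain ⟨w, hw⟩ := not_muSep_single.mp hns
    refine muSep_single_iff.mp hsep (w.app (.cons (.dirF h) (.nil _))) ?_
    exact Walk.muConn_app hw _ _ (fun h' => by simp [Step.headStart] at h')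
      (fun _ => haC) trivial rfl
  · intro γ δ C haC hbC hsep
    by_contra hns
    push_neg at hns
    obtain ⟨w₁, hw₁⟩ := not_muSep_single.mp hns.1
    obtain ⟨w₂, hw₂⟩ := not_muSep_single.mp hns.2
    obtain ⟨y₂, t₂, b₂, rfl, h1, h2, h3⟩ := Walk.muConn_elim hw₂
    refine muSep_single_iff.mp hsep (w₁.app (.cons (.dirB h) (.cons t₂ b₂))) ?_
    refine Walk.muConn_app hw₁ _ _ (fun _ => subset_anSet C hbC)
      (fun h' => by simp [Step.headStart] at h') ?_ (by simpa using h3)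
    refine ⟨?_, h2⟩
    simp only [Step.headEnd, Bool.false_and]
    rw [if_neg (by simp)]
    exact haC
  · intro γ C haC hsep
    by_contra hns
    obtain ⟨w, hw⟩ := not_muSep_single.mp hns
    obtain ⟨y₀, s₀, bd, rfl, h1, h2, h3⟩ := Walk.muConn_elim hw
    have hbC : b ∉ C := fun hc => h1 (Or.inl hc)
    rcases Walk.split_first_badcol (C₁ := C ∪ {a}) (C₂ := C) (Anc₁ := G.anSet (C ∪ {a}))
        (Anc₂ := G.anSet C) Set.subset_union_left bd _ h2 with hgood |
        ⟨x₂, y₂, w₁, s₂, w₂', heq, _, _, _, hx1, hx2, ho2⟩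
    · exact muSep_single_iff.mp hsep _ (Walk.muConn_mk s₀ bd hbC hgood h3)
    · have hanc : G.anc x₂ a := by
        rw [anSet_union_singleton] at hx1
        rcases hx1 with h' | h'
        · exact absurd h' hx2
        · exact h'
      obtain ⟨u, hu⟩ := jump (G := G) Set.subset_union_left haC
        (fun z hz hz2 => by
          rw [anSet_union_singleton] at hz
          rcases hz with h' | h'
          · exact absurd h' hz2
          · exact h') w₂'.len s₂ w₂' le_rfl hanc hx2 ho2
        (by rw [heq, Walk.lstM_app, Walk.lstM_cons] at h3; exact h3)
      obtain ⟨y₃, t₃, b₃, rfl, hu1, hu2, hu3⟩ := Walk.muConn_elim hu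
      refine muSep_single_iff.mp hsep (.cons (.dirB h) (.cons t₃ b₃)) ?_
      refine Walk.muConn_mk _ _ hbC ⟨?_, hu2⟩ (by simpa using hu3)
      simp only [Step.headEnd, Bool.false_and]
      rw [if_neg (by simp)]
      exact haC

end EdgePotential

section NuMachinery

/-- Pass to a suffix (still starting at `a`) whose judged nodes avoid `a`. -/
lemma Walk.afree_suffix {a δ : V} {C Anc : Set V} :
    ∀ (n : ℕ) (y : V) (t : Step G a y) (νb : Walk G y δ), νb.len ≤ n →
      Walk.openFrom C Anc t.headEnd νb → νb.lstM t.headEnd = true →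
      ∃ (y' : V) (t' : Step G a y') (νb' : Walk G y' δ),
        Walk.openFrom C Anc t'.headEnd νb' ∧ νb'.lstM t'.headEnd = true ∧
        ∀ z ∈ νb'.judged, z ≠ a := by
  intro n
  induction n using Nat.strong_induction_on with
  | _ n ih =>
    intro y t νb hlen hop hl
    by_cases hf : ∀ z ∈ νb.judged, z ≠ a
    · exact ⟨y, t, νb, hop, hl, hf⟩
    · push_neg at hf
      obtain ⟨z, hz, hza⟩ := hf
      rw [hza] at hz
      obtain ⟨y₃, w₁, s₃, w₃, heq, hlen₃⟩ := Walk.split_at_judged νb hz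
      subst heq
      rw [Walk.openFrom_app, Walk.openFrom_cons] at hop
      rw [Walk.lstM_app, Walk.lstM_cons] at hl
      have : w₃.len < n := lt_of_lt_of_le (by simpa using hlen₃) hlen
      exact ih w₃.len this y₃ s₃ w₃ le_rfl hop.2.2 hl

/-- From inseparability, a reversed μ-connecting walk from `b` to `a`,
open both given `C` and given `C ∪ {a}`. -/
lemma exists_rev_nu {a b : V} (hu : G.inU a b) {C : Set V} (ha : a ∉ C) :
    ∃ (z : V) (s' : Step G b z) (bd : Walk G z a),
      s'.headStart = true ∧
      Walk.openFrom C (G.anSet C) s'.headEnd bd ∧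
      Walk.openFrom (C ∪ {a}) (G.anSet (C ∪ {a})) s'.headEnd bd := by
  obtain ⟨ν, hν⟩ := inU_walks hu C ha
  obtain ⟨y, t, νb, rfl, _, hop, hl⟩ := Walk.muConn_elim hν
  obtain ⟨y', t', νb', hop', hl', haf⟩ := Walk.afree_suffix νb.len y t νb le_rfl hop hl
  obtain ⟨z, s', bd, hs1, _, htr⟩ := Walk.revOpen νb' t'
  obtain ⟨hbd, hjud⟩ := htr C (G.anSet C) hop'
  refine ⟨z, s', bd, by rw [hs1, hl'], hbd, ?_⟩
  exact Walk.openFrom_lift (subset_refl _) (anSet_mono_set Set.subset_union_left) bd _ hbd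
    (fun z' hz' => haf z' (hjud z' hz'))

/-- The D′ lemma: from a μ-connecting walk from `a` (the potential parent),
a μ-connecting walk from `b`. -/
lemma dprime {a b : V} (hu : G.inU a b)
    (hp4 : ∀ (γ : V) (C : Set V), a ∉ C → G.muSep {b} {γ} C → G.muSep {b} {γ} (C ∪ {a}))
    {C : Set V} (haC : a ∉ C) (hbC : b ∉ C) {δ : V} (τ : Walk G a δ) (hτ : τ.MuConn C) :
    ∃ u : Walk G b δ, u.MuConn C := by
  by_cases hab : a = b
  · subst hab; exact ⟨τ, hτ⟩
  obtain ⟨y₂, s₂, τb, rfl, _, hτop, hτl⟩ := Walk.muConn_elim hτ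
  obtain ⟨y₂', s₂', τb', hop', hl', haf⟩ := Walk.afree_suffix τb.len y₂ s₂ τb le_rfl hτop hτl
  obtain ⟨z, s', bd, hs1, hbdC, hbdC'⟩ := exists_rev_nu hu haC
  by_cases hcol : (bd.lstM s'.headEnd && s₂'.headStart) = true
  · -- route via `C ∪ {a}` and p4
    have hW : (Walk.cons s' (bd.app (.cons s₂' τb'))).MuConn (C ∪ {a}) := by
      refine Walk.muConn_mk _ _ ?_ ?_ ?_
      · rintro (hc | hc)
        · exact hbC hc
        · exact hab (Set.mem_singleton_iff.mp hc).symm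
      · rw [Walk.openFrom_app, Walk.openFrom_cons]
        refine ⟨hbdC', ?_, ?_⟩
        · rw [if_pos hcol]
          exact subset_anSet _ (Or.inr rfl)
        · exact Walk.openFrom_lift (subset_refl _)
            (anSet_mono_set Set.subset_union_left) τb' _ hop' haf
      · rw [Walk.lstM_app, Walk.lstM_cons]
        exact hl'
    by_contra hns
    have hsep : G.muSep {b} {δ} C := muSep_single_iff.mpr fun u hu' => hns ⟨u, hu'⟩
    exact muSep_single_iff.mp (hp4 δ C haC hsep) _ hW
  · refine ⟨.cons s' (bd.app (.cons s₂' τb')), Walk.muConn_mk _ _ hbC ?_ ?_⟩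
    · rw [Walk.openFrom_app, Walk.openFrom_cons]
      refine ⟨hbdC, ?_, hop'⟩
      rw [if_neg hcol]
      exact haC
    · rw [Walk.lstM_app, Walk.lstM_cons]
      exact hl'

/-- The core of the `n = 0` case for adding a potential-parent edge: a walk
in `G` whose colliders are allowed to be ancestors of `a` can be replaced by a
μ-connecting walk. -/
lemma semi {a b : V} (hu : G.inU a b)
    (hp2 : ∀ (γ : V) (C : Set V), a ∉ C → G.muSep {γ} {b} C → G.muSep {γ} {a} C)
    (hp3 : ∀ (γ δ : V) (C : Set V), a ∉ C → b ∈ C → G.muSep {γ} {δ} C →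
      G.muSep {γ} {b} C ∨ G.muSep {a} {δ} C)
    (hp4 : ∀ (γ : V) (C : Set V), a ∉ C → G.muSep {b} {γ} C → G.muSep {b} {γ} (C ∪ {a}))
    {C : Set V} (haC : a ∉ C) (hbA : b ∈ G.anSet C)
    {γ δ y : V} (hγ : γ ∉ C) (s₀ : Step G γ y) (body : Walk G y δ)
    (hop : Walk.openFrom C (G.anSet C ∪ {z | G.anc z a}) s₀.headEnd body)
    (hl : body.lstM s₀.headEnd = true) :
    ∃ u : Walk G γ δ, u.MuConn C := by
  rcases Walk.split_first_badcol (C₁ := C) (C₂ := C) (Anc₁ := G.anSet C ∪ {z | G.anc z a})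
      (Anc₂ := G.anSet C) (subset_refl C) body _ hop with hgood |
      ⟨x₁, y₁, w₁, s', w₂, heq, ho₁, hl₁, hhs, hx1, hx2, ho₂⟩
  · exact ⟨.cons s₀ body, Walk.muConn_mk _ _ hγ hgood hl⟩
  · have hanc : G.anc x₁ a := by
      rcases hx1 with h' | h'
      · exact absurd h' hx2
      · exact h'
    obtain ⟨dw, hdw, hdl⟩ := exists_dirWalk (G := G) (C := C) (G.anSet C) hanc hx2
    have hW1 : (Walk.cons s₀ (w₁.app dw)).MuConn C := by
      refine Walk.muConn_mk _ _ hγ ?_ ?_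
      · rw [Walk.openFrom_app, hl₁]
        exact ⟨ho₁, hdw⟩
      · rw [Walk.lstM_app, hl₁]
        exact hdl
    have hW2 : ∃ w : Walk G γ b, w.MuConn C := by
      by_contra hns
      have hsepb : G.muSep {γ} {b} C := muSep_single_iff.mpr fun u hu' => hns ⟨u, hu'⟩
      exact muSep_single_iff.mp (hp2 γ C haC hsepb) _ hW1
    obtain ⟨W2, hW2⟩ := hW2
    have hlast₂ : w₂.lstM s'.headEnd = true := by
      rw [heq, Walk.lstM_app, Walk.lstM_cons] at hl
      exact hl
    obtain ⟨τ, hτ⟩ := jump (G := G) (C := C) (C' := C)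
      (Anc' := G.anSet C ∪ {z | G.anc z a}) (subset_refl C) haC
      (fun z hz hz2 => by
        rcases hz with h' | h'
        · exact absurd h' hz2
        · exact h')
      w₂.len s' w₂ le_rfl hanc hx2 ho₂ hlast₂
    by_cases hbC : b ∈ C
    · by_contra hns
      have hsepγδ : G.muSep {γ} {δ} C := muSep_single_iff.mpr fun u hu' => hns ⟨u, hu'⟩
      rcases hp3 γ δ C haC hbC hsepγδ with hs | hs
      · exact muSep_single_iff.mp hs _ hW2
      · exact muSep_single_iff.mp hs _ hτ
    · obtain ⟨W8, hW8⟩ := dprime hu hp4 haC hbC τ hτ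
      obtain ⟨y₈, s₈, b₈, rfl, _, h₈op, h₈l⟩ := Walk.muConn_elim hW8
      exact ⟨W2.app (.cons s₈ b₈),
        Walk.muConn_app hW2 _ _ (fun _ => hbA) (fun _ => hbC) h₈op h₈l⟩

end NuMachinery

section BadNHelpers

variable {H : DMG V}

lemma Walk.map_allGood {G₁ G₂ : DMG V} (hs : Sub G₁ G₂) :
    ∀ {x y : V} (w : Walk G₁ x y), (w.map hs).allGood G₁ := by
  intro x y w
  induction w with
  | nil => trivial
  | cons s w ih => exact ⟨⟨s, (Step.map_headStart hs s).symm, (Step.map_headEnd hs s).symm⟩, ih⟩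

lemma Walk.badN_map {G₁ G₂ : DMG V} (hs : Sub G₁ G₂) {x y : V} (w : Walk G₁ x y) :
    (w.map hs).badN G₁ = 0 := (Walk.badN_zero_iff _).mpr (Walk.map_allGood hs w)

lemma Walk.badN_allGood_app {x y z : V} {w₁ : Walk H x y} (h : w₁.allGood G)
    (w₂ : Walk H y z) : (w₁.app w₂).badN G = w₂.badN G := by
  rw [Walk.badN_app, (Walk.badN_zero_iff _).mpr h, Nat.zero_add]

lemma Walk.badN_cons_good {x y z : V} {s : Step H x y} (hs : GoodStep G s)
    (w : Walk H y z) : (Walk.cons s w).badN G = w.badN G := by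
  rw [Walk.badN, if_pos hs, Nat.zero_add]

lemma GoodStep.of_map {G₁ G₂ : DMG V} (hs : Sub G₁ G₂) {x y : V} (s : Step G₁ x y) :
    GoodStep G₁ (s.map hs) := ⟨s, (Step.map_headStart hs s).symm, (Step.map_headEnd hs s).symm⟩

end BadNHelpers

section MainA

/-- Adding a potential-sibling edge: every μ-connecting walk in `G + a ↔ b`
can be replaced by one in `G`. -/
lemma markov_addBi_walk {a b : V} (hPS : G.PotSib a b) :
    ∀ (n : ℕ) (C : Set V) {γ δ : V} (w : Walk (G.addBi a b) γ δ),
      w.badN G = n → w.MuConn C → ∃ u : Walk G γ δ, u.MuConn C := by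
  obtain ⟨⟨huba, huab⟩, hs2, hs3⟩ := hPS
  intro n
  induction n using Nat.strong_induction_on with
  | _ n ih =>
    intro C γ δ w hbn hw
    cases n with
    | zero =>
      obtain ⟨y₀, s₀, body, rfl, hγ, hop, hl⟩ := Walk.muConn_elim hw
      have hall : (Walk.cons s₀ body).allGood G := (Walk.badN_zero_iff _).mp hbn
      obtain ⟨⟨t₀, ht1, ht2⟩, hall'⟩ := hall
      obtain ⟨body', htr, hlst⟩ := Walk.strip body hall'
      refine ⟨.cons t₀ body', Walk.muConn_mk _ _ hγ ?_ ?_⟩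
      · rw [ht2]; exact htr _ _ _ hop
      · rw [ht2, hlst]; exact hl
    | succ m =>
      obtain ⟨x, y, w₁, sN, w₂, heq, hall, hbadN, hn2⟩ := Walk.split_first_bad w hbn
      subst heq
      obtain ⟨⟨hsS, hsE⟩, hxy⟩ := badStep_addBi sN hbadN
      have hUxy : G.inU x y := by
        rcases hxy with ⟨rfl, rfl⟩ | ⟨rfl, rfl⟩
        · exact huab
        · exact huba
      cases w₁ with
      | nil =>
        rw [Walk.nil_app] at hw
        have hγC : γ ∉ C := hw.1
        have hop2 := hw.2.1
        have hl2 : w₂.lstM sN.headEnd = true := by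
          have := hw.2.2; rwa [Walk.lastHead_cons] at this
        obtain ⟨ν, hν⟩ := inU_walks hUxy C hγC
        obtain ⟨yν, tν, νb, rfl, _, hνop, hνl⟩ := Walk.muConn_elim hν
        refine ih m (Nat.lt_succ_self m) C
          (Walk.cons (tν.map (sub_addBi a b)) ((νb.map (sub_addBi a b)).app w₂)) ?_ ?_
        · rw [Walk.badN_cons_good (GoodStep.of_map _ tν),
            Walk.badN_allGood_app (Walk.map_allGood _ νb)]
          exact hn2
        · refine Walk.muConn_mk _ _ hγC ?_ ?_
          · rw [Step.map_headEnd, Walk.openFrom_app]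
            refine ⟨Walk.map_openFrom _ νb _ hνop, ?_⟩
            rw [Walk.map_lstM, hνl]
            rw [hsE] at hop2
            exact hop2
          · rw [Step.map_headEnd, Walk.lstM_app, Walk.map_lstM, hνl]
            rw [hsE] at hl2
            exact hl2
      | cons s₀ w₁' =>
        rw [Walk.cons_app] at hw
        have hγC : γ ∉ C := hw.1
        have hop := hw.2.1
        have hlast : (w₁'.app (Walk.cons sN w₂)).lstM s₀.headEnd = true := by
          have := hw.2.2; rwa [Walk.lastHead_cons] at this
        rw [Walk.openFrom_app] at hop
        obtain ⟨ho₁, ho₂⟩ := hop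
        rw [Walk.openFrom_cons] at ho₂
        obtain ⟨hjx, ho₃⟩ := ho₂
        rw [Walk.lstM_app, Walk.lstM_cons] at hlast
        by_cases hxC : x ∈ C
        · -- collider at `x ∈ C`; replace the prefix via s2/s3
          have hcolx : (w₁'.lstM s₀.headEnd && sN.headStart) = true := by
            by_contra hc
            rw [if_neg hc] at hjx
            exact hjx hxC
          obtain ⟨⟨t₀, ht1, ht2⟩, hallw⟩ := hall
          obtain ⟨w₁'', htr, hlst⟩ := Walk.strip w₁' hallw
          have hP : (Walk.cons t₀ w₁'').MuConn C := by
            refine Walk.muConn_mk _ _ hγC ?_ ?_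
            · rw [ht2]; exact htr _ _ _ ho₁
            · rw [ht2, hlst]
              exact (Bool.and_eq_true_iff.mp hcolx).1
          have hW2 : ∃ u : Walk G γ y, u.MuConn C := by
            by_contra hns
            have hsy : G.muSep {γ} {y} C := muSep_single_iff.mpr fun u hu' => hns ⟨u, hu'⟩
            have hsx : G.muSep {γ} {x} C := by
              rcases hxy with ⟨rfl, rfl⟩ | ⟨rfl, rfl⟩
              · exact hs3 γ C hxC hsy
              · exact hs2 γ C hxC hsy
            exact muSep_single_iff.mp hsx _ hP
          obtain ⟨W2, hW2⟩ := hW2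
          cases w₂ with
          | nil => exact ⟨W2, hW2⟩
          | cons s₂ w₂' =>
            rw [Walk.openFrom_cons] at ho₃
            obtain ⟨hjy, ho₄⟩ := ho₃
            rw [hsE] at hjy
            refine ih m (Nat.lt_succ_self m) C
              ((W2.map (sub_addBi a b)).app (.cons s₂ w₂')) ?_ ?_
            · rw [Walk.badN_allGood_app (Walk.map_allGood _ W2)]
              exact hn2
            · refine Walk.muConn_app (Walk.map_muConn (sub_addBi a b) hW2) s₂ w₂' ?_ ?_ ho₄ ?_
              · intro hs2s
                rw [hs2s] at hjy
                simpa using hjy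
              · intro hs2s
                rw [hs2s] at hjy
                simpa using hjy
              · rw [hsE, Walk.lstM_cons] at hlast
                exact hlast
        · -- noncollider at `x ∉ C`: splice in a connecting walk from `x` to `y`
          obtain ⟨ν, hν⟩ := inU_walks hUxy C hxC
          obtain ⟨yν, tν, νb, rfl, _, hνop, hνl⟩ := Walk.muConn_elim hν
          refine ih m (Nat.lt_succ_self m) C
            (Walk.cons s₀ (w₁'.app
              (.cons (tν.map (sub_addBi a b)) ((νb.map (sub_addBi a b)).app w₂)))) ?_ ?_
          · rw [Walk.badN_cons_good hall.1,
              Walk.badN_allGood_app hall.2,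
              Walk.badN_cons_good (GoodStep.of_map _ tν),
              Walk.badN_allGood_app (Walk.map_allGood _ νb)]
            exact hn2
          · refine Walk.muConn_mk _ _ hγC ?_ ?_
            · rw [Walk.openFrom_app, Walk.openFrom_cons]
              refine ⟨ho₁, ?_, ?_⟩
              · by_cases hj : (w₁'.lstM s₀.headEnd && (tν.map (sub_addBi a b)).headStart) = true
                · rw [if_pos hj]
                  have hcolx : (w₁'.lstM s₀.headEnd && sN.headStart) = true := by
                    rw [hsS]
                    simpa using (Bool.and_eq_true_iff.mp hj).1
                  rw [if_pos hcolx] at hjx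
                  exact hjx
                · rw [if_neg hj]
                  exact hxC
              · rw [Step.map_headEnd, Walk.openFrom_app]
                refine ⟨Walk.map_openFrom _ νb _ hνop, ?_⟩
                rw [Walk.map_lstM, hνl]
                rw [hsE] at ho₃
                exact ho₃
            · rw [Walk.lstM_app, Walk.lstM_cons, Step.map_headEnd, Walk.lstM_app,
                Walk.map_lstM, hνl]
              rw [hsE] at hlast
              exact hlast

end MainA

section MainB

/-- Adding a potential-parent edge: every μ-connecting walk in `G + a → b`
can be replaced by one in `G`. -/
lemma markov_addDir_walk {a b : V} (hPP : G.PotPar a b) :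
    ∀ (n : ℕ) (C : Set V) {γ δ : V} (w : Walk (G.addDir a b) γ δ),
      w.badN G = n → w.MuConn C → ∃ u : Walk G γ δ, u.MuConn C := by
  obtain ⟨hu, hp2, hp3, hp4⟩ := hPP
  intro n
  induction n using Nat.strong_induction_on with
  | _ n ih =>
    intro C γ δ w hbn hw
    cases n with
    | zero =>
      obtain ⟨y₀, s₀, body, rfl, hγ, hop, hl⟩ := Walk.muConn_elim hw
      have hall : (Walk.cons s₀ body).allGood G := (Walk.badN_zero_iff _).mp hbn
      obtain ⟨⟨t₀, ht1, ht2⟩, hall'⟩ := hall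
      obtain ⟨body', htr, hlst⟩ := Walk.strip body hall'
      by_cases haC : a ∈ C
      · have hsub : (G.addDir a b).anSet C ⊆ G.anSet C := by
          intro z hz
          rcases anSet_addDir_subset a b C hz with h' | h'
          · exact h'
          · exact ⟨a, haC, h'⟩
        refine ⟨.cons t₀ body', Walk.muConn_mk _ _ hγ ?_ ?_⟩
        · rw [ht2]
          exact htr _ _ _ (Walk.openFrom_mono hsub body _ hop)
        · rw [ht2, hlst]; exact hl
      · by_cases hbA : b ∈ G.anSet C
        · have hop' : Walk.openFrom C (G.anSet C ∪ {z | G.anc z a}) t₀.headEnd body' := by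
            rw [ht2]
            exact htr _ _ _ (Walk.openFrom_mono (anSet_addDir_subset a b C) body _ hop)
          exact semi hu hp2 hp3 hp4 haC hbA hγ t₀ body' hop' (by rw [ht2, hlst]; exact hl)
        · have hsub : (G.addDir a b).anSet C ⊆ G.anSet C := anSet_addDir_of_not a b hbA
          refine ⟨.cons t₀ body', Walk.muConn_mk _ _ hγ ?_ ?_⟩
          · rw [ht2]
            exact htr _ _ _ (Walk.openFrom_mono hsub body _ hop)
          · rw [ht2, hlst]; exact hl
    | succ m =>
      obtain ⟨x, y, w₁, sN, w₂, heq, hall, hbadN, hn2⟩ := Walk.split_first_bad w hbn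
      subst heq
      rcases badStep_addDir sN hbadN with ⟨rfl, rfl, hsS, hsE⟩ | ⟨rfl, rfl, hsS, hsE⟩
      · -- FORWARD: tail at `a`, head at `b`
        cases w₁ with
        | nil =>
          rw [Walk.nil_app] at hw
          have haC : a ∉ C := hw.1
          have hop2 := hw.2.1
          have hl2 : w₂.lstM sN.headEnd = true := by
            have := hw.2.2; rwa [Walk.lastHead_cons] at this
          obtain ⟨ν, hν⟩ := inU_walks hu C haC
          obtain ⟨yν, tν, νb, rfl, _, hνop, hνl⟩ := Walk.muConn_elim hν
          refine ih m (Nat.lt_succ_self m) C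
            (Walk.cons (tν.map (sub_addDir a b)) ((νb.map (sub_addDir a b)).app w₂)) ?_ ?_
          · rw [Walk.badN_cons_good (GoodStep.of_map _ tν),
              Walk.badN_allGood_app (Walk.map_allGood _ νb)]
            exact hn2
          · refine Walk.muConn_mk _ _ haC ?_ ?_
            · rw [Step.map_headEnd, Walk.openFrom_app]
              refine ⟨Walk.map_openFrom _ νb _
                (Walk.openFrom_mono (anSet_mono (sub_addDir a b) C) νb _ hνop), ?_⟩
              rw [Walk.map_lstM, hνl]
              rw [hsE] at hop2
              exact hop2
            · rw [Step.map_headEnd, Walk.lstM_app, Walk.map_lstM, hνl]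
              rw [hsE] at hl2
              exact hl2
        | cons s₀ w₁' =>
          rw [Walk.cons_app] at hw
          have hγC : γ ∉ C := hw.1
          have hopAll := hw.2.1
          have hlast : (w₁'.app (Walk.cons sN w₂)).lstM s₀.headEnd = true := by
            have := hw.2.2; rwa [Walk.lastHead_cons] at this
          rw [Walk.openFrom_app] at hopAll
          obtain ⟨ho₁, ho₂⟩ := hopAll
          rw [Walk.openFrom_cons] at ho₂
          obtain ⟨hja, ho₃⟩ := ho₂
          rw [Walk.lstM_app, Walk.lstM_cons] at hlast
          have haC : a ∉ C := by
            rw [hsS, Bool.and_false] at hja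
            rw [if_neg (by simp)] at hja
            exact hja
          obtain ⟨ν, hν⟩ := inU_walks hu C haC
          obtain ⟨yν, tν, νb, rfl, _, hνop, hνl⟩ := Walk.muConn_elim hν
          by_cases hbA : b ∈ G.anSet C
          · refine ih m (Nat.lt_succ_self m) C
              (Walk.cons s₀ (w₁'.app
                (.cons (tν.map (sub_addDir a b)) ((νb.map (sub_addDir a b)).app w₂)))) ?_ ?_
            · rw [Walk.badN_cons_good hall.1, Walk.badN_allGood_app hall.2,
                Walk.badN_cons_good (GoodStep.of_map _ tν),
                Walk.badN_allGood_app (Walk.map_allGood _ νb)]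
              exact hn2
            · refine Walk.muConn_mk _ _ hγC ?_ ?_
              · rw [Walk.openFrom_app, Walk.openFrom_cons]
                refine ⟨ho₁, ?_, ?_⟩
                · by_cases hj :
                      (w₁'.lstM s₀.headEnd && (tν.map (sub_addDir a b)).headStart) = true
                  · rw [if_pos hj]
                    exact mem_anSet_addDir a b hbA
                  · rw [if_neg hj]
                    exact haC
                · rw [Step.map_headEnd, Walk.openFrom_app]
                  refine ⟨Walk.map_openFrom _ νb _
                    (Walk.openFrom_mono (anSet_mono (sub_addDir a b) C) νb _ hνop), ?_⟩
                  rw [Walk.map_lstM, hνl]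
                  rw [hsE] at ho₃
                  exact ho₃
              · rw [Walk.lstM_app, Walk.lstM_cons, Step.map_headEnd, Walk.lstM_app,
                  Walk.map_lstM, hνl]
                rw [hsE] at hlast
                exact hlast
          · have hsub : (G.addDir a b).anSet C ⊆ G.anSet C := anSet_addDir_of_not a b hbA
            by_cases hcrit : (w₁'.lstM s₀.headEnd && tν.headStart) = true
            · -- replace the prefix using p2
              obtain ⟨⟨t₀, ht1, ht2⟩, hallw⟩ := hall
              obtain ⟨w₁'', htr, hlst⟩ := Walk.strip w₁' hallw
              have hP : (Walk.cons t₀ w₁'').MuConn C := by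
                refine Walk.muConn_mk _ _ hγC ?_ ?_
                · rw [ht2]
                  exact htr _ _ _ (Walk.openFrom_mono hsub w₁' _ ho₁)
                · rw [ht2, hlst]
                  exact (Bool.and_eq_true_iff.mp hcrit).1
              have hW2 : ∃ u : Walk G γ b, u.MuConn C := by
                by_contra hns
                have hsb : G.muSep {γ} {b} C := muSep_single_iff.mpr fun u hu' => hns ⟨u, hu'⟩
                exact muSep_single_iff.mp (hp2 γ C haC hsb) _ hP
              obtain ⟨W2, hW2⟩ := hW2
              cases w₂ with
              | nil => exact ⟨W2, hW2⟩
              | cons s₂ w₂' =>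
                rw [Walk.openFrom_cons] at ho₃
                obtain ⟨hjb, ho₄⟩ := ho₃
                rw [hsE] at hjb
                refine ih m (Nat.lt_succ_self m) C
                  ((W2.map (sub_addDir a b)).app (.cons s₂ w₂')) ?_ ?_
                · rw [Walk.badN_allGood_app (Walk.map_allGood _ W2)]
                  exact hn2
                · refine Walk.muConn_app (Walk.map_muConn (sub_addDir a b) hW2)
                    s₂ w₂' ?_ ?_ ho₄ ?_
                  · intro hs2s
                    rw [hs2s] at hjb
                    simpa using hjb
                  · intro hs2s
                    rw [hs2s] at hjb
                    simpa using hjb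
                  · rw [hsE, Walk.lstM_cons] at hlast
                    exact hlast
            · -- splice, noncollider at `a`
              refine ih m (Nat.lt_succ_self m) C
                (Walk.cons s₀ (w₁'.app
                  (.cons (tν.map (sub_addDir a b)) ((νb.map (sub_addDir a b)).app w₂)))) ?_ ?_
              · rw [Walk.badN_cons_good hall.1, Walk.badN_allGood_app hall.2,
                  Walk.badN_cons_good (GoodStep.of_map _ tν),
                  Walk.badN_allGood_app (Walk.map_allGood _ νb)]
                exact hn2
              · refine Walk.muConn_mk _ _ hγC ?_ ?_
                · rw [Walk.openFrom_app, Walk.openFrom_cons]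
                  refine ⟨ho₁, ?_, ?_⟩
                  · rw [if_neg (by rw [Step.map_headStart]; exact hcrit)]
                    exact haC
                  · rw [Step.map_headEnd, Walk.openFrom_app]
                    refine ⟨Walk.map_openFrom _ νb _
                      (Walk.openFrom_mono (anSet_mono (sub_addDir a b) C) νb _ hνop), ?_⟩
                    rw [Walk.map_lstM, hνl]
                    rw [hsE] at ho₃
                    exact ho₃
                · rw [Walk.lstM_app, Walk.lstM_cons, Step.map_headEnd, Walk.lstM_app,
                    Walk.map_lstM, hνl]
                  rw [hsE] at hlast
                  exact hlast
      · -- BACKWARD: head at `b`, tail at `a`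
        cases w₂ with
        | nil =>
          exfalso
          obtain ⟨y₀, s₀', bd', heqq, _, _, hl'⟩ := Walk.muConn_elim hw
          have h1 : (w₁.app (Walk.cons sN (Walk.nil a))).lstM false = true := by
            rw [heqq, Walk.lstM_cons]; exact hl'
          rw [Walk.lstM_app, Walk.lstM_cons, Walk.lstM_nil, hsE] at h1
          exact Bool.false_ne_true h1
        | cons s₂ w₂' =>
          cases w₁ with
          | nil =>
            rw [Walk.nil_app] at hw
            have hbγ : b ∉ C := hw.1
            have hop2 := hw.2.1
            rw [Walk.openFrom_cons] at hop2
            obtain ⟨hja, ho₄⟩ := hop2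
            have haC : a ∉ C := by
              rw [hsE] at hja
              rw [if_neg (by simp)] at hja
              exact hja
            have hlast : w₂'.lstM s₂.headEnd = true := by
              have := hw.2.2
              rw [Walk.lastHead_cons, Walk.lstM_cons] at this
              exact this
            by_cases hbA : b ∈ G.anSet C
            · obtain ⟨z, s', bd, hs'1, hbdC, _⟩ := exists_rev_nu hu haC
              refine ih m (Nat.lt_succ_self m) C
                (Walk.cons (s'.map (sub_addDir a b))
                  ((bd.map (sub_addDir a b)).app (.cons s₂ w₂'))) ?_ ?_
              · rw [Walk.badN_cons_good (GoodStep.of_map _ s'),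
                  Walk.badN_allGood_app (Walk.map_allGood _ bd)]
                exact hn2
              · refine Walk.muConn_mk _ _ hbγ ?_ ?_
                · rw [Step.map_headEnd, Walk.openFrom_app]
                  refine ⟨Walk.map_openFrom _ bd _
                    (Walk.openFrom_mono (anSet_mono (sub_addDir a b) C) bd _ hbdC), ?_⟩
                  rw [Walk.openFrom_cons, Walk.map_lstM]
                  refine ⟨?_, ho₄⟩
                  by_cases hj : (bd.lstM s'.headEnd && s₂.headStart) = true
                  · rw [if_pos hj]
                    exact mem_anSet_addDir a b hbA
                  · rw [if_neg hj]
                    exact haC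
                · rw [Step.map_headEnd, Walk.lstM_app, Walk.map_lstM, Walk.lstM_cons]
                  exact hlast
            · have hbC : b ∉ C := hbγ
              obtain ⟨τG, hτG⟩ := ih m (Nat.lt_succ_self m) C (Walk.cons s₂ w₂') hn2
                (Walk.muConn_mk _ _ haC ho₄ hlast)
              exact dprime hu hp4 haC hbC τG hτG
          | cons s₀ w₁' =>
            rw [Walk.cons_app] at hw
            have hγC : γ ∉ C := hw.1
            have hopAll := hw.2.1
            have hlast : (w₁'.app (Walk.cons sN (Walk.cons s₂ w₂'))).lstM s₀.headEnd = true := by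
              have := hw.2.2; rwa [Walk.lastHead_cons] at this
            rw [Walk.openFrom_app] at hopAll
            obtain ⟨ho₁, ho₂⟩ := hopAll
            rw [Walk.openFrom_cons] at ho₂
            obtain ⟨hjb, ho₃⟩ := ho₂
            rw [Walk.openFrom_cons] at ho₃
            obtain ⟨hja, ho₄⟩ := ho₃
            rw [Walk.lstM_app, Walk.lstM_cons, Walk.lstM_cons] at hlast
            have haC : a ∉ C := by
              rw [hsE] at hja
              rw [if_neg (by simp)] at hja
              exact hja
            by_cases hbA : b ∈ G.anSet C
            · obtain ⟨z, s', bd, hs'1, hbdC, _⟩ := exists_rev_nu hu haC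
              refine ih m (Nat.lt_succ_self m) C
                (Walk.cons s₀ (w₁'.app (.cons (s'.map (sub_addDir a b))
                  ((bd.map (sub_addDir a b)).app (.cons s₂ w₂'))))) ?_ ?_
              · rw [Walk.badN_cons_good hall.1, Walk.badN_allGood_app hall.2,
                  Walk.badN_cons_good (GoodStep.of_map _ s'),
                  Walk.badN_allGood_app (Walk.map_allGood _ bd)]
                exact hn2
              · refine Walk.muConn_mk _ _ hγC ?_ ?_
                · rw [Walk.openFrom_app, Walk.openFrom_cons]
                  refine ⟨ho₁, ?_, ?_⟩
                  · rw [show (w₁'.lstM s₀.headEnd && (s'.map (sub_addDir a b)).headStart)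
                        = (w₁'.lstM s₀.headEnd && sN.headStart) by
                      rw [Step.map_headStart, hs'1, hsS]]
                    exact hjb
                  · rw [Step.map_headEnd, Walk.openFrom_app]
                    refine ⟨Walk.map_openFrom _ bd _
                      (Walk.openFrom_mono (anSet_mono (sub_addDir a b) C) bd _ hbdC), ?_⟩
                    rw [Walk.openFrom_cons, Walk.map_lstM]
                    refine ⟨?_, ho₄⟩
                    by_cases hj : (bd.lstM s'.headEnd && s₂.headStart) = true
                    · rw [if_pos hj]
                      exact mem_anSet_addDir a b hbA
                    · rw [if_neg hj]
                      exact haC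
                · rw [Walk.lstM_app, Walk.lstM_cons, Step.map_headEnd, Walk.lstM_app,
                    Walk.map_lstM, Walk.lstM_cons]
                  exact hlast
            · have hsub : (G.addDir a b).anSet C ⊆ G.anSet C := anSet_addDir_of_not a b hbA
              have hbC : b ∉ C := fun hc => hbA (subset_anSet C hc)
              -- the entry mark at `b` must be a tail
              have he : w₁'.lstM s₀.headEnd = false := by
                cases hcase : w₁'.lstM s₀.headEnd
                · rfl
                · exfalso
                  rw [hcase, hsS] at hjb
                  simp only [Bool.and_self, if_true] at hjb
                  exact hbA (hsub hjb)
              obtain ⟨τG, hτG⟩ := ih m (Nat.lt_succ_self m) C (Walk.cons s₂ w₂') hn2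
                (Walk.muConn_mk _ _ haC ho₄ hlast)
              obtain ⟨W8, hW8⟩ := dprime hu hp4 haC hbC τG hτG
              obtain ⟨y₈, s₈, b₈, rfl, _, h₈op, h₈l⟩ := Walk.muConn_elim hW8
              obtain ⟨⟨t₀, ht1, ht2⟩, hallw⟩ := hall
              obtain ⟨w₁'', htr, hlst⟩ := Walk.strip w₁' hallw
              refine ⟨Walk.cons t₀ (w₁''.app (.cons s₈ b₈)), Walk.muConn_mk _ _ hγC ?_ ?_⟩
              · rw [ht2, Walk.openFrom_app, Walk.openFrom_cons]
                refine ⟨htr _ _ _ (Walk.openFrom_mono hsub w₁' _ ho₁), ?_, h₈op⟩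
                rw [hlst, he, Bool.false_and]
                rw [if_neg (by simp)]
                exact hbC
              · rw [ht2, Walk.lstM_app, Walk.lstM_cons]
                exact h₈l

end MainB

section Assembly

lemma markovEq_of_walks {H : DMG V} (hsub : Sub G H)
    (hback : ∀ (C : Set V) {γ δ : V} (w : Walk H γ δ), w.MuConn C →
      ∃ u : Walk G γ δ, u.MuConn C) :
    MarkovEq H G := by
  intro A B C
  constructor
  · intro h x y hx hy w hw
    exact h hx hy (w.map hsub) (Walk.map_muConn hsub hw)
  · intro h x y hx hy w hw
    obtain ⟨u, hu⟩ := hback C w hw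
    exact h hx hy u hu

lemma markovEq_addBi {a b : V} (hPS : G.PotSib a b) : MarkovEq (G.addBi a b) G :=
  markovEq_of_walks (sub_addBi a b)
    (fun C _ _ w hw => markov_addBi_walk hPS (w.badN G) C w rfl hw)

lemma markovEq_addDir {a b : V} (hPP : G.PotPar a b) : MarkovEq (G.addDir a b) G :=
  markovEq_of_walks (sub_addDir a b)
    (fun C _ _ w hw => markov_addDir_walk hPP (w.badN G) C w rfl hw)

lemma MarkovEq.refl' (G : DMG V) : MarkovEq G G := fun _ _ _ => Iff.rfl

lemma MarkovEq.symm' {G₁ G₂ : DMG V} (h : MarkovEq G₁ G₂) : MarkovEq G₂ G₁ :=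
  fun A B C => (h A B C).symm

lemma MarkovEq.trans' {G₁ G₂ G₃ : DMG V} (h : MarkovEq G₁ G₂) (h' : MarkovEq G₂ G₃) :
    MarkovEq G₁ G₃ := fun A B C => (h A B C).trans (h' A B C)

lemma inU_congr {G₁ G₂ : DMG V} (h : MarkovEq G₁ G₂) {x y : V} (hu : G₁.inU x y) :
    G₂.inU x y := by
  rintro ⟨C, hC, hs⟩
  exact hu ⟨C, hC, (h _ _ _).mpr hs⟩

lemma potPar_congr {G₁ G₂ : DMG V} (h : MarkovEq G₁ G₂) {x y : V} (hp : G₁.PotPar x y) :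
    G₂.PotPar x y := by
  obtain ⟨h1, h2, h3, h4⟩ := hp
  refine ⟨inU_congr h h1, ?_, ?_, ?_⟩
  · intro γ C haC hs
    exact (h _ _ _).mp (h2 γ C haC ((h _ _ _).mpr hs))
  · intro γ δ C haC hbC hs
    rcases h3 γ δ C haC hbC ((h _ _ _).mpr hs) with hs' | hs'
    · exact Or.inl ((h _ _ _).mp hs')
    · exact Or.inr ((h _ _ _).mp hs')
  · intro γ C haC hs
    exact (h _ _ _).mp (h4 γ C haC ((h _ _ _).mpr hs))

lemma potSib_congr {G₁ G₂ : DMG V} (h : MarkovEq G₁ G₂) {x y : V} (hp : G₁.PotSib x y) :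
    G₂.PotSib x y := by
  obtain ⟨⟨h1, h1'⟩, h2, h3⟩ := hp
  refine ⟨⟨inU_congr h h1, inU_congr h h1'⟩, ?_, ?_⟩
  · intro γ C hbC hs
    exact (h _ _ _).mp (h2 γ C hbC ((h _ _ _).mpr hs))
  · intro γ C haC hs
    exact (h _ _ _).mp (h3 γ C haC ((h _ _ _).mpr hs))

lemma ext_of {G₁ G₂ : DMG V} (h1 : G₁.dir = G₂.dir) (h2 : G₁.bi = G₂.bi) : G₁ = G₂ := by
  cases G₁; cases G₂
  cases h1; cases h2
  rfl

lemma muSep_anti {G₁ G₂ : DMG V} (hs : Sub G₁ G₂) {A B C : Set V} (h : G₂.muSep A B C) :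
    G₁.muSep A B C :=
  fun _ _ hx hy w hw => h hx hy (w.map hs) (Walk.map_muConn hs hw)

lemma Sub.trans' {G₁ G₂ G₃ : DMG V} (h : Sub G₁ G₂) (h' : Sub G₂ G₃) : Sub G₁ G₃ :=
  ⟨fun a b hd => h'.1 a b (h.1 a b hd), fun a b hb => h'.2 a b (h.2 a b hb)⟩

section KG

variable [DecidableEq (V × V)]

/-- Intermediate graphs interpolating between `G` and `N(I(G))`. -/
def Kgraph (G : DMG V) (S T : Finset (V × V)) : DMG V where
  dir x y := G.dir x y ∨ ((x, y) ∈ S ∧ G.PotPar x y)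
  bi x y := G.bi x y ∨ (((x, y) ∈ T ∨ (y, x) ∈ T) ∧ (G.PotSib x y ∨ G.PotSib y x))
  bi_symm x y h := by
    rcases h with h | ⟨ht, hs⟩
    · exact Or.inl (G.bi_symm _ _ h)
    · exact Or.inr ⟨ht.symm, hs.symm⟩

lemma Kgraph_empty (G : DMG V) : Kgraph G ∅ ∅ = G := by
  refine ext_of ?_ ?_ <;> funext x y <;> apply propext <;> simp [Kgraph]

lemma Kgraph_univ (G : DMG V) [Fintype V] :
    Kgraph G Finset.univ Finset.univ = G.NGraph := by
  refine ext_of ?_ ?_ <;> funext x y <;> apply propext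
  · show G.dir x y ∨ ((x, y) ∈ Finset.univ ∧ G.PotPar x y) ↔ G.PotPar x y
    simp only [Finset.mem_univ, true_and]
    exact ⟨fun h' => h'.elim potPar_of_dir id, Or.inr⟩
  · show G.bi x y ∨ (((x, y) ∈ Finset.univ ∨ (y, x) ∈ Finset.univ) ∧
        (G.PotSib x y ∨ G.PotSib y x)) ↔ (G.PotSib x y ∨ G.PotSib y x)
    simp only [Finset.mem_univ, true_or, true_and]
    exact ⟨fun h' => h'.elim (fun hb => Or.inl (potSib_of_bi hb)) id, Or.inr⟩

lemma Kgraph_insert_dir (G : DMG V) (S T : Finset (V × V)) (p : V × V)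
    (hp : G.PotPar p.1 p.2) :
    Kgraph G (insert p S) T = (Kgraph G S T).addDir p.1 p.2 := by
  refine ext_of ?_ rfl
  funext x y
  apply propext
  show G.dir x y ∨ ((x, y) ∈ insert p S ∧ G.PotPar x y) ↔
    (G.dir x y ∨ ((x, y) ∈ S ∧ G.PotPar x y)) ∨ (x = p.1 ∧ y = p.2)
  rw [Finset.mem_insert]
  constructor
  · rintro (hd | ⟨hm | hm, hpp⟩)
    · exact Or.inl (Or.inl hd)
    · exact Or.inr ⟨(Prod.ext_iff.mp hm).1, (Prod.ext_iff.mp hm).2⟩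
    · exact Or.inl (Or.inr ⟨hm, hpp⟩)
  · rintro ((hd | ⟨hm, hpp⟩) | ⟨hx, hy⟩)
    · exact Or.inl hd
    · exact Or.inr ⟨Or.inr hm, hpp⟩
    · refine Or.inr ⟨Or.inl (Prod.ext_iff.mpr ⟨hx, hy⟩), ?_⟩
      rw [hx, hy]
      exact hp

lemma Kgraph_insert_dir_not (G : DMG V) (S T : Finset (V × V)) (p : V × V)
    (hp : ¬ G.PotPar p.1 p.2) :
    Kgraph G (insert p S) T = Kgraph G S T := by
  refine ext_of ?_ rfl
  funext x y
  apply propext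
  show G.dir x y ∨ ((x, y) ∈ insert p S ∧ G.PotPar x y) ↔
    G.dir x y ∨ ((x, y) ∈ S ∧ G.PotPar x y)
  rw [Finset.mem_insert]
  constructor
  · rintro (hd | ⟨hm | hm, hpp⟩)
    · exact Or.inl hd
    · exfalso
      apply hp
      rw [← (Prod.ext_iff.mp hm).1, ← (Prod.ext_iff.mp hm).2]
      exact hpp
    · exact Or.inr ⟨hm, hpp⟩
  · rintro (hd | ⟨hm, hpp⟩)
    · exact Or.inl hd
    · exact Or.inr ⟨Or.inr hm, hpp⟩

lemma Kgraph_insert_bi (G : DMG V) (S T : Finset (V × V)) (p : V × V)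
    (hp : G.PotSib p.1 p.2 ∨ G.PotSib p.2 p.1) :
    Kgraph G S (insert p T) = (Kgraph G S T).addBi p.1 p.2 := by
  refine ext_of rfl ?_
  funext x y
  apply propext
  show G.bi x y ∨ (((x, y) ∈ insert p T ∨ (y, x) ∈ insert p T) ∧
      (G.PotSib x y ∨ G.PotSib y x)) ↔
    (G.bi x y ∨ (((x, y) ∈ T ∨ (y, x) ∈ T) ∧ (G.PotSib x y ∨ G.PotSib y x))) ∨
      (x = p.1 ∧ y = p.2) ∨ (x = p.2 ∧ y = p.1)
  rw [Finset.mem_insert, Finset.mem_insert]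
  constructor
  · rintro (hb | ⟨hm | hm, hps⟩)
    · exact Or.inl (Or.inl hb)
    · rcases hm with hm | hm
      · exact Or.inr (Or.inl ⟨(Prod.ext_iff.mp hm).1, (Prod.ext_iff.mp hm).2⟩)
      · exact Or.inl (Or.inr ⟨Or.inl hm, hps⟩)
    · rcases hm with hm | hm
      · exact Or.inr (Or.inr ⟨(Prod.ext_iff.mp hm).2, (Prod.ext_iff.mp hm).1⟩)
      · exact Or.inl (Or.inr ⟨Or.inr hm, hps⟩)
  · rintro ((hb | ⟨hm, hps⟩) | ⟨hx, hy⟩ | ⟨hx, hy⟩)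
    · exact Or.inl hb
    · rcases hm with hm | hm
      · exact Or.inr ⟨Or.inl (Or.inr hm), hps⟩
      · exact Or.inr ⟨Or.inr (Or.inr hm), hps⟩
    · refine Or.inr ⟨Or.inl (Or.inl (Prod.ext_iff.mpr ⟨hx, hy⟩)), ?_⟩
      rw [hx, hy]
      exact hp
    · refine Or.inr ⟨Or.inr (Or.inl (Prod.ext_iff.mpr ⟨hy, hx⟩)), ?_⟩
      rw [hx, hy]
      exact hp.symm

lemma Kgraph_insert_bi_not (G : DMG V) (S T : Finset (V × V)) (p : V × V)
    (hp : ¬ (G.PotSib p.1 p.2 ∨ G.PotSib p.2 p.1)) :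
    Kgraph G S (insert p T) = Kgraph G S T := by
  refine ext_of rfl ?_
  funext x y
  apply propext
  rw [show ((Kgraph G S (insert p T)).bi x y) = (G.bi x y ∨
      (((x, y) ∈ insert p T ∨ (y, x) ∈ insert p T) ∧
        (G.PotSib x y ∨ G.PotSib y x))) from rfl,
    show ((Kgraph G S T).bi x y) = (G.bi x y ∨
      (((x, y) ∈ T ∨ (y, x) ∈ T) ∧ (G.PotSib x y ∨ G.PotSib y x))) from rfl,
    Finset.mem_insert, Finset.mem_insert]
  constructor
  · rintro (hb | ⟨hm | hm, hps⟩)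
    · exact Or.inl hb
    · rcases hm with hm | hm
      · exfalso
        apply hp
        rw [← (Prod.ext_iff.mp hm).1, ← (Prod.ext_iff.mp hm).2]
        exact hps
      · exact Or.inr ⟨Or.inl hm, hps⟩
    · rcases hm with hm | hm
      · exfalso
        apply hp
        rw [← (Prod.ext_iff.mp hm).1, ← (Prod.ext_iff.mp hm).2]
        exact hps.symm
      · exact Or.inr ⟨Or.inr hm, hps⟩
  · rintro (hb | ⟨hm | hm, hps⟩)
    · exact Or.inl hb
    · exact Or.inr ⟨Or.inl (Or.inr hm), hps⟩
    · exact Or.inr ⟨Or.inr (Or.inr hm), hps⟩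

lemma addBi_comm (G : DMG V) (a b : V) : G.addBi a b = G.addBi b a := by
  refine ext_of rfl ?_
  funext x y
  apply propext
  show G.bi x y ∨ (x = a ∧ y = b) ∨ (x = b ∧ y = a) ↔
    G.bi x y ∨ (x = b ∧ y = a) ∨ (x = a ∧ y = b)
  tauto

lemma markov_KT (G : DMG V) (S : Finset (V × V)) (hS : MarkovEq (Kgraph G S ∅) G) :
    ∀ T : Finset (V × V), MarkovEq (Kgraph G S T) G := by
  intro T
  induction T using Finset.induction_on with
  | empty => exact hS
  | @insert p T hpT ih =>
    by_cases hp : G.PotSib p.1 p.2 ∨ G.PotSib p.2 p.1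
    · rw [Kgraph_insert_bi G S T p hp]
      rcases hp with hp | hp
      · exact MarkovEq.trans' (markovEq_addBi (potSib_congr (MarkovEq.symm' ih) hp)) ih
      · rw [addBi_comm]
        exact MarkovEq.trans' (markovEq_addBi (potSib_congr (MarkovEq.symm' ih) hp)) ih
    · rw [Kgraph_insert_bi_not G S T p hp]
      exact ih

lemma markov_KS (G : DMG V) : ∀ S : Finset (V × V), MarkovEq (Kgraph G S ∅) G := by
  intro S
  induction S using Finset.induction_on with
  | empty => rw [Kgraph_empty]; exact MarkovEq.refl' G
  | @insert p S hpS ih =>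
    by_cases hp : G.PotPar p.1 p.2
    · rw [Kgraph_insert_dir G S ∅ p hp]
      exact MarkovEq.trans' (markovEq_addDir (potPar_congr (MarkovEq.symm' ih) hp)) ih
    · rw [Kgraph_insert_dir_not G S ∅ p hp]
      exact ih

lemma markovEq_NGraph' (G : DMG V) [Fintype V] [DecidableEq (V × V)] :
    MarkovEq G.NGraph G := by
  rw [← Kgraph_univ]
  exact markov_KT G Finset.univ (markov_KS G Finset.univ) Finset.univ

end KG

lemma markovEq_NGraph (G : DMG V) [Fintype V] : MarkovEq G.NGraph G := by
  haveI := Classical.decEq (V × V)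
  exact markovEq_NGraph' G

lemma sub_NGraph_of_markovEq {G' : DMG V} (h : MarkovEq G' G) : Sub G' G.NGraph := by
  constructor
  · intro x y hd
    exact potPar_congr h (potPar_of_dir hd)
  · intro x y hb
    exact Or.inl (potSib_congr h (potSib_of_bi hb))

end Assembly

end DMG

/-- Theorem 2: the graph `N = N(I(G))` built from the
potential parents and potential siblings of `I(G)` satisfies: (i)
`I(N) = I(G)`; (ii) `N` is a supergraph of every DMG Markov equivalent to
`G`; (iii) along any increasing finite sequence of DMGs from `G` to `N`,
every graph is Markov equivalent to `N`. -/
theorem stmt16 {V : Type u} [Fintype V] (G : DMG V) :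
    DMG.MarkovEq (G.NGraph) G ∧
    (∀ G' : DMG V, DMG.MarkovEq G' G → DMG.Sub G' G.NGraph) ∧
    (∀ (m : ℕ) (Gs : Fin (m + 1) → DMG V),
      Gs 0 = G → Gs (Fin.last m) = G.NGraph →
      (∀ i : Fin m, DMG.Sub (Gs i.castSucc) (Gs i.succ)) →
      ∀ i : Fin (m + 1), DMG.MarkovEq (Gs i) G.NGraph) := by
  have hN : DMG.MarkovEq G.NGraph G := DMG.markovEq_NGraph G
  refine ⟨hN, fun G' h => DMG.sub_NGraph_of_markovEq h, ?_⟩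
  intro m Gs h0 hlast hstep i
  have h1 : ∀ j : Fin (m + 1), DMG.Sub (Gs 0) (Gs j) := by
    intro j
    induction j using Fin.induction with
    | zero => exact DMG.Sub.refl (Gs 0)
    | succ j ih => exact DMG.Sub.trans' ih (hstep j)
  have h2 : ∀ j : Fin (m + 1), DMG.Sub (Gs j) (Gs (Fin.last m)) := by
    intro j
    induction j using Fin.reverseInduction with
    | last => exact DMG.Sub.refl _
    | cast j ih => exact DMG.Sub.trans' (hstep j) ih
  intro A B C
  constructor
  · intro hs
    have hsub : DMG.Sub G (Gs i) := by rw [← h0]; exact h1 i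
    exact (hN A B C).mpr (DMG.muSep_anti hsub hs)
  · intro hs
    have hsub : DMG.Sub (Gs i) G.NGraph := by rw [← hlast]; exact h2 i
    exact DMG.muSep_anti hsub hs
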